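/- arXiv:2212.09049 — 10 statements merged into one kernel-verified Lean document; each statement's English description precedes it below -/
import Mathlib

section
/- Let N ≥ 1, z : Fin N → ℂ and h ∈ ℂ. There exists a phase vector φ : Fin N → ℝ with (∑_i z_i · exp(φ_i · I)) + h = 0 if and only if sInf (Set.range f) ≤ |h| ≤ sSup (Set.range f), where f(φ) = |∑_i z_i · exp(φ_i · I)|. (Paper's Lemma 2: a perfect-covertness phase configuration exists iff |h_{a,w}| lies between the minimum and maximum over all phases of the modulus of the reflected sum.) -/
open Complex Filter

/-- Paper's Lemma 2: a perfect-covertness phase configuration exists iff `|h|` lies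
between the minimum and maximum over all phases of the modulus of the reflected sum. -/
theorem perfect_covertness_iff (N : ℕ) (hN : 1 ≤ N) (z : Fin N → ℂ) (h : ℂ)
    (f : (Fin N → ℝ) → ℝ)
    (hf : ∀ φ : Fin N → ℝ, f φ = ‖∑ i, z i * Complex.exp ((φ i : ℂ) * Complex.I)‖) :
    (∃ φ : Fin N → ℝ, (∑ i, z i * Complex.exp ((φ i : ℂ) * Complex.I)) + h = 0) ↔
      sInf (Set.range f) ≤ ‖h‖ ∧ ‖h‖ ≤ sSup (Set.range f) := by
  have hfe : f = fun φ => ‖∑ i, z i * Complex.exp ((φ i : ℂ) * Complex.I)‖ :=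
    funext hf
  subst hfe
  set g : (Fin N → ℝ) → ℂ := fun φ => ∑ i, z i * Complex.exp ((φ i : ℂ) * Complex.I) with hg
  have hgc : Continuous g := by
    apply continuous_finset_sum
    intro i _
    exact continuous_const.mul (Complex.continuous_exp.comp
      ((Complex.continuous_ofReal.comp (continuous_apply i)).mul continuous_const))
  have hfc : Continuous fun φ => ‖g φ‖ := continuous_norm.comp hgc
  -- compact box
  set K : Set (Fin N → ℝ) := Set.univ.pi fun _ => Set.Icc (0:ℝ) (2*Real.pi) with hK
  have hKc : IsCompact K := isCompact_univ_pi fun _ => isCompact_Icc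
  have hKne : K.Nonempty := ⟨fun _ => 0, by
    intro i _
    exact ⟨le_refl 0, by positivity⟩⟩
  have hKconv : Convex ℝ K := convex_pi fun _ _ => convex_Icc _ _
  -- range = image of box
  have hrange : Set.range (fun φ => ‖g φ‖) = (fun φ => ‖g φ‖) '' K := by
    apply Set.Subset.antisymm
    · rintro x ⟨φ, rfl⟩
      refine ⟨fun i => 2*Real.pi * Int.fract (φ i / (2*Real.pi)), ?_, ?_⟩
      · intro i _
        constructor
        · have := Int.fract_nonneg (φ i / (2*Real.pi)); positivity
        · have h1 : Int.fract (φ i / (2*Real.pi)) ≤ 1 := (Int.fract_lt_one _).le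
          nlinarith [Real.pi_pos]
      · show ‖g _‖ = ‖g φ‖
        simp only [hg]
        congr 1
        apply Finset.sum_congr rfl
        intro i _
        congr 1
        rw [Complex.exp_eq_exp_iff_exists_int]
        refine ⟨-⌊φ i / (2*Real.pi)⌋, ?_⟩
        have hπ : (2*Real.pi) ≠ 0 := by positivity
        have hfr : 2*Real.pi * Int.fract (φ i / (2*Real.pi))
            = φ i - (⌊φ i / (2*Real.pi)⌋ : ℤ) * (2*Real.pi) := by
          rw [Int.fract]; field_simp
        push_cast [hfr]
        ring
    · rintro x ⟨φ, _, rfl⟩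
      exact ⟨φ, rfl⟩
  have himgc : IsCompact ((fun φ => ‖g φ‖) '' K) := hKc.image hfc
  have himgne : ((fun φ => ‖g φ‖) '' K).Nonempty := hKne.image _
  constructor
  · rintro ⟨φ, hφ⟩
    have hsum : g φ = -h := by rw [hg]; simpa [eq_neg_iff_add_eq_zero] using hφ
    have hmem : ‖h‖ ∈ Set.range (fun φ => ‖g φ‖) :=
      ⟨φ, by show ‖g φ‖ = _; rw [hsum, norm_neg]⟩
    rw [hrange] at hmem ⊢
    exact ⟨csInf_le himgc.bddBelow hmem, le_csSup himgc.bddAbove hmem⟩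
  · rintro ⟨h1, h2⟩
    rw [hrange] at h1 h2
    have hinf : sInf ((fun φ => ‖g φ‖) '' K) ∈ (fun φ => ‖g φ‖) '' K :=
      himgc.sInf_mem himgne
    have hsup : sSup ((fun φ => ‖g φ‖) '' K) ∈ (fun φ => ‖g φ‖) '' K :=
      himgc.sSup_mem himgne
    have hconn : IsPreconnected ((fun φ => ‖g φ‖) '' K) :=
      (hKconv.isPreconnected).image _ hfc.continuousOn
    have hmem : ‖h‖ ∈ (fun φ => ‖g φ‖) '' K :=
      hconn.Icc_subset hinf hsup ⟨h1, h2⟩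
    obtain ⟨φ, -, hφ⟩ := hmem
    simp only [] at hφ
    by_cases h0 : h = 0
    · subst h0
      have : g φ = 0 := by
        have : ‖g φ‖ = 0 := by rw [hφ]; simp
        exact norm_eq_zero.mp this
      exact ⟨φ, by simpa [hg] using this⟩
    · have hgφ : g φ ≠ 0 := by
        intro hc
        apply h0
        rw [hc] at hφ
        exact norm_eq_zero.mp (by simpa using hφ.symm)
      set θ : ℝ := Complex.arg (-h) - Complex.arg (g φ) with hθ
      refine ⟨fun i => φ i + θ, ?_⟩
      have hsum : (∑ i, z i * Complex.exp (((φ i + θ : ℝ) : ℂ) * Complex.I))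
          = g φ * Complex.exp ((θ:ℂ) * Complex.I) := by
        rw [hg, Finset.sum_mul]
        apply Finset.sum_congr rfl
        intro i _
        push_cast
        rw [add_mul, Complex.exp_add, mul_assoc]
      rw [hsum]
      have key : g φ * Complex.exp ((θ:ℂ) * Complex.I) = -h := by
        conv_lhs => rw [← Complex.norm_mul_exp_arg_mul_I (g φ)]
        rw [mul_assoc, ← Complex.exp_add, ← add_mul]
        have habs : (‖g φ‖ : ℂ) = (‖-h‖ : ℂ) := by
          rw [norm_neg, hφ]
        have harg : ((Complex.arg (g φ) : ℂ)) + (θ:ℂ) = (Complex.arg (-h) : ℂ) := by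
          rw [hθ]; push_cast; ring
        rw [habs, harg, Complex.norm_mul_exp_arg_mul_I]
      rw [key]; ring
end

section
/- Let z₁, z₂ ∈ ℂ with z₁ ≠ 0 and z₂ ≠ 0, and let c ≥ 0 satisfy ||z₁| − |z₂|| ≤ c ≤ |z₁| + |z₂|. Set r₁ = |z₁|, r₂ = |z₂|, and A = arccos((c² − (r₁² + r₂²)) / (2·r₁·r₂)). Then both phases φ⁺ = arg z₂ − arg z₁ + A and φ⁻ = arg z₂ − arg z₁ − A satisfy |z₁ · exp(φ · I) + z₂| = c. (Paper's Lemma 3: the two explicit phase solutions for a 2-element IRS.) -/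
open Complex Real

lemma key_sq (z₁ z₂ : ℂ) (hz₁ : z₁ ≠ 0) (a : ℝ) :
    (‖(z₁ * Complex.exp ((↑(Complex.arg z₂ - Complex.arg z₁ + a) : ℂ) * Complex.I) + z₂)‖) ^ 2
      = (‖z₁‖) ^ 2 + (‖z₂‖) ^ 2
        + 2 * ‖z₁‖ * ‖z₂‖ * Real.cos a := by
  set r₁ := ‖z₁‖ with hr₁
  set r₂ := ‖z₂‖ with hr₂
  set t₁ := Complex.arg z₁ with ht₁
  set t₂ := Complex.arg z₂ with ht₂
  have hz1' : (r₁ : ℂ) * Complex.exp ((t₁ : ℂ) * Complex.I) = z₁ :=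
    Complex.norm_mul_exp_arg_mul_I z₁
  have hz2' : (r₂ : ℂ) * Complex.exp ((t₂ : ℂ) * Complex.I) = z₂ :=
    Complex.norm_mul_exp_arg_mul_I z₂
  have h1 : z₁ * Complex.exp ((↑(t₂ - t₁ + a) : ℂ) * Complex.I) + z₂
      = Complex.exp ((t₂ : ℂ) * Complex.I) *
        ((r₁ : ℂ) * Complex.exp ((a : ℂ) * Complex.I) + (r₂ : ℂ)) := by
    rw [← hz1', ← hz2', mul_assoc, ← Complex.exp_add, mul_add, ← mul_assoc,
      mul_comm (Complex.exp ((t₂ : ℂ) * Complex.I)) (r₁ : ℂ), mul_assoc, ← Complex.exp_add]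
    push_cast
    ring_nf
  rw [h1, norm_mul, Complex.norm_exp]
  simp only [Complex.mul_I_re, Complex.ofReal_im, neg_zero, Real.exp_zero, one_mul]
  rw [Complex.sq_norm, Complex.normSq_apply]
  simp only [Complex.add_re, Complex.add_im, Complex.mul_re, Complex.mul_im,
    Complex.ofReal_re, Complex.ofReal_im, Complex.exp_ofReal_mul_I_re,
    Complex.exp_ofReal_mul_I_im, zero_mul, sub_zero, mul_zero, add_zero, zero_add]
  nlinarith [Real.sin_sq_add_cos_sq a]

/-- Paper's Lemma 3: the two explicit phase solutions for a 2-element IRS. -/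
theorem two_element_phase_solutions (z₁ z₂ : ℂ) (hz₁ : z₁ ≠ 0) (hz₂ : z₂ ≠ 0)
    (c : ℝ) (hc : 0 ≤ c)
    (hlow : |‖z₁‖ - ‖z₂‖| ≤ c)
    (hhigh : c ≤ ‖z₁‖ + ‖z₂‖) :
    ‖(z₁ * Complex.exp
        ((↑(Complex.arg z₂ - Complex.arg z₁ +
            Real.arccos ((c ^ 2 - ((‖z₁‖) ^ 2 + (‖z₂‖) ^ 2)) /
              (2 * ‖z₁‖ * ‖z₂‖))) : ℂ) * Complex.I) + z₂)‖ = c ∧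
    ‖(z₁ * Complex.exp
        ((↑(Complex.arg z₂ - Complex.arg z₁ -
            Real.arccos ((c ^ 2 - ((‖z₁‖) ^ 2 + (‖z₂‖) ^ 2)) /
              (2 * ‖z₁‖ * ‖z₂‖))) : ℂ) * Complex.I) + z₂)‖ = c := by
  set r₁ := ‖z₁‖ with hr₁
  set r₂ := ‖z₂‖ with hr₂
  have hr₁0 : 0 < r₁ := norm_pos_iff.mpr hz₁
  have hr₂0 : 0 < r₂ := norm_pos_iff.mpr hz₂
  set x := (c ^ 2 - (r₁ ^ 2 + r₂ ^ 2)) / (2 * r₁ * r₂) with hx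
  have h2 : (0:ℝ) < 2 * r₁ * r₂ := by positivity
  have hxlo : -1 ≤ x := by
    rw [hx, le_div_iff₀ h2]
    have := abs_le.mp hlow
    nlinarith
  have hxhi : x ≤ 1 := by
    rw [hx, div_le_iff₀ h2]
    nlinarith
  have hcos : Real.cos (Real.arccos x) = x := Real.cos_arccos hxlo hxhi
  have hval : r₁ ^ 2 + r₂ ^ 2 + 2 * r₁ * r₂ * x = c ^ 2 := by
    rw [hx]
    field_simp
    ring
  constructor
  · have h := key_sq z₁ z₂ hz₁ (Real.arccos x)
    rw [hcos, hval] at h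
    have habs : 0 ≤ ‖(z₁ * Complex.exp
        ((↑(Complex.arg z₂ - Complex.arg z₁ + Real.arccos x) : ℂ) * Complex.I) + z₂)‖ :=
      norm_nonneg _
    nlinarith [h, habs]
  · have h := key_sq z₁ z₂ hz₁ (-(Real.arccos x))
    rw [Real.cos_neg, hcos, hval] at h
    have heq : Complex.arg z₂ - Complex.arg z₁ - Real.arccos x
        = Complex.arg z₂ - Complex.arg z₁ + (-(Real.arccos x)) := by ring
    rw [heq]
    have habs : 0 ≤ ‖(z₁ * Complex.exp
        ((↑(Complex.arg z₂ - Complex.arg z₁ + (-(Real.arccos x))) : ℂ) * Complex.I) + z₂)‖ :=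
      norm_nonneg _
    nlinarith [h, habs]
end

section
/- Let r ∈ ℝ and c ∈ ℂ. Then for every t ∈ ℝ, the function t ↦ |r · exp(t · I) + c|² has derivative −2·r·|c|·sin(t − arg c) at t; that is, HasDerivAt (fun t => |r · exp(t·I) + c|²) (−2·r·|c|·sin(t − arg c)) t. (The k-th partial derivative formula for the received power derived in Appendix C.) -/
open Complex Real

/-- The k-th partial derivative formula for the received power derived in Appendix C. -/
theorem hasDerivAt_abs_sq_phased (r : ℝ) (c : ℂ) (t : ℝ) :
    HasDerivAt (fun t : ℝ => ‖(r : ℂ) * Complex.exp ((t : ℂ) * Complex.I) + c‖ ^ 2)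
      (-2 * r * ‖c‖ * Real.sin (t - Complex.arg c)) t := by
  have key : ∀ s : ℝ,
      ‖(r : ℂ) * Complex.exp ((s : ℂ) * Complex.I) + c‖ ^ 2
        = r ^ 2 + ‖c‖ ^ 2
          + 2 * r * ‖c‖ * Real.cos (s - Complex.arg c) := by
    intro s
    conv_lhs => rw [← Complex.norm_mul_exp_arg_mul_I c]
    rw [Complex.sq_norm]
    simp only [Complex.normSq_apply, Complex.exp_mul_I, Complex.mul_re, Complex.mul_im,
      Complex.add_re, Complex.add_im, Complex.ofReal_re, Complex.ofReal_im,
      Complex.cos_ofReal_re, Complex.cos_ofReal_im, Complex.sin_ofReal_re,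
      Complex.sin_ofReal_im, Complex.I_re, Complex.I_im, Real.cos_sub]
    have hc := Real.sin_sq_add_cos_sq s
    have hφ := Real.sin_sq_add_cos_sq (Complex.arg c)
    ring_nf
    nlinarith [hc, hφ]
  have h1 : HasDerivAt (fun s : ℝ => r ^ 2 + ‖c‖ ^ 2
      + 2 * r * ‖c‖ * Real.cos (s - Complex.arg c))
      (-2 * r * ‖c‖ * Real.sin (t - Complex.arg c)) t := by
    have h2 : HasDerivAt (fun s : ℝ => Real.cos (s - Complex.arg c))
        (-Real.sin (t - Complex.arg c)) t := by
      have := ((hasDerivAt_id t).sub_const (Complex.arg c)).cos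
      simpa using this
    have := (h2.const_mul (2 * r * ‖c‖)).const_add (r ^ 2 + ‖c‖ ^ 2)
    refine this.congr_deriv ?_
    ring
  exact h1.congr_of_eventuallyEq (Filter.Eventually.of_forall fun s => key s)
end

section
/- Let N ∈ ℕ and r : Fin N → ℝ with r_k > 0 for all k, and define PWR : EuclideanSpace ℝ (Fin N) → ℝ by PWR(φ) = |∑_i r_i · exp(φ_i · I)|². Then φ is a critical point of PWR (i.e. fderiv ℝ PWR φ = 0) if and only if for every k ∈ Fin N, either c_k(φ) = 0 or sin(φ_k − arg (c_k(φ))) = 0, where c_k(φ) = ∑_{i ≠ k} r_i · exp(φ_i · I). Equivalently, when c_k(φ) ≠ 0, φ_k = arg(c_k(φ)) + n·π for some integer n. (Paper's Lemma 5: each phase points along or opposite to the sum of all other vectors.) -/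
open Complex Real

private lemma hasFDerivAt_proj (N : ℕ) (i : Fin N) (φ : EuclideanSpace ℝ (Fin N)) :
    HasFDerivAt (fun ψ : EuclideanSpace ℝ (Fin N) => ψ i)
      (EuclideanSpace.proj i : EuclideanSpace ℝ (Fin N) →L[ℝ] ℝ) φ := by
  have := (EuclideanSpace.proj (𝕜 := ℝ) i).hasFDerivAt (x := φ)
  convert this using 2
  rfl

/-- Paper's Lemma 5: `φ` is a critical point of `PWR` iff each phase points along or opposite
to the sum of all other vectors. -/
theorem critical_point_iff_aligned (N : ℕ) (r : Fin N → ℝ) (hr : ∀ k, 0 < r k)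
    (PWR : EuclideanSpace ℝ (Fin N) → ℝ)
    (hPWR : ∀ φ : EuclideanSpace ℝ (Fin N),
      PWR φ = (‖∑ i, (r i : ℂ) * Complex.exp ((φ i : ℂ) * Complex.I)‖) ^ 2)
    (φ : EuclideanSpace ℝ (Fin N)) :
    fderiv ℝ PWR φ = 0 ↔
      ∀ k : Fin N,
        (∑ i ∈ Finset.univ.erase k, (r i : ℂ) * Complex.exp ((φ i : ℂ) * Complex.I)) = 0 ∨
        Real.sin (φ k -
          Complex.arg (∑ i ∈ Finset.univ.erase k,
            (r i : ℂ) * Complex.exp ((φ i : ℂ) * Complex.I))) = 0 := by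
  classical
  set c : Fin N → ℂ :=
    fun k => ∑ i ∈ Finset.univ.erase k, (r i : ℂ) * Complex.exp ((φ i : ℂ) * Complex.I) with hc
  set S : ℂ := ∑ i, (r i : ℂ) * Complex.exp ((φ i : ℂ) * Complex.I) with hS
  have hSc : ∀ k, S = c k + (r k : ℂ) * Complex.exp ((φ k : ℂ) * Complex.I) := by
    intro k
    rw [hS, hc, ← Finset.sum_erase_add Finset.univ _ (Finset.mem_univ k)]
  -- real/imaginary parts
  have hre : ∀ ψ : EuclideanSpace ℝ (Fin N),
      (∑ i, (r i : ℂ) * Complex.exp ((ψ i : ℂ) * Complex.I)).re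
        = ∑ i, r i * Real.cos (ψ i) := by
    intro ψ
    rw [Complex.re_sum]
    refine Finset.sum_congr rfl fun i _ => ?_
    simp [Complex.mul_re, Complex.exp_ofReal_mul_I_re, Complex.exp_ofReal_mul_I_im]
  have him : ∀ ψ : EuclideanSpace ℝ (Fin N),
      (∑ i, (r i : ℂ) * Complex.exp ((ψ i : ℂ) * Complex.I)).im
        = ∑ i, r i * Real.sin (ψ i) := by
    intro ψ
    rw [Complex.im_sum]
    refine Finset.sum_congr rfl fun i _ => ?_
    simp [Complex.mul_im, Complex.exp_ofReal_mul_I_re, Complex.exp_ofReal_mul_I_im]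
  have hPWR' : PWR = fun ψ : EuclideanSpace ℝ (Fin N) =>
      (∑ i, r i * Real.cos (ψ i)) * (∑ i, r i * Real.cos (ψ i)) +
      (∑ i, r i * Real.sin (ψ i)) * (∑ i, r i * Real.sin (ψ i)) := by
    funext ψ
    rw [hPWR, Complex.sq_norm, Complex.normSq_apply, hre, him]
  -- derivatives of the real parts
  have hA : HasFDerivAt (fun ψ : EuclideanSpace ℝ (Fin N) => ∑ i, r i * Real.cos (ψ i))
      (∑ i, r i • ((-Real.sin (φ i)) •
        (EuclideanSpace.proj i : EuclideanSpace ℝ (Fin N) →L[ℝ] ℝ))) φ := by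
    apply HasFDerivAt.fun_sum
    intro i _
    exact ((Real.hasDerivAt_cos (φ i)).comp_hasFDerivAt φ
      (hasFDerivAt_proj N i φ)).const_mul (r i)
  have hB : HasFDerivAt (fun ψ : EuclideanSpace ℝ (Fin N) => ∑ i, r i * Real.sin (ψ i))
      (∑ i, r i • ((Real.cos (φ i)) •
        (EuclideanSpace.proj i : EuclideanSpace ℝ (Fin N) →L[ℝ] ℝ))) φ := by
    apply HasFDerivAt.fun_sum
    intro i _
    exact ((Real.hasDerivAt_sin (φ i)).comp_hasFDerivAt φ
      (hasFDerivAt_proj N i φ)).const_mul (r i)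
  have hP : HasFDerivAt PWR
      (((∑ i, r i * Real.cos (φ i)) • (∑ i, r i • ((-Real.sin (φ i)) •
          (EuclideanSpace.proj i : EuclideanSpace ℝ (Fin N) →L[ℝ] ℝ)))
        + (∑ i, r i * Real.cos (φ i)) • (∑ i, r i • ((-Real.sin (φ i)) •
          (EuclideanSpace.proj i : EuclideanSpace ℝ (Fin N) →L[ℝ] ℝ)))) +
       ((∑ i, r i * Real.sin (φ i)) • (∑ i, r i • ((Real.cos (φ i)) •
          (EuclideanSpace.proj i : EuclideanSpace ℝ (Fin N) →L[ℝ] ℝ)))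
        + (∑ i, r i * Real.sin (φ i)) • (∑ i, r i • ((Real.cos (φ i)) •
          (EuclideanSpace.proj i : EuclideanSpace ℝ (Fin N) →L[ℝ] ℝ))))) φ := by
    rw [hPWR']
    exact (hA.mul hA).add (hB.mul hB)
  rw [hP.fderiv]
  set L : EuclideanSpace ℝ (Fin N) →L[ℝ] ℝ :=
      ((∑ i, r i * Real.cos (φ i)) • (∑ i, r i • ((-Real.sin (φ i)) •
          (EuclideanSpace.proj i : EuclideanSpace ℝ (Fin N) →L[ℝ] ℝ)))
        + (∑ i, r i * Real.cos (φ i)) • (∑ i, r i • ((-Real.sin (φ i)) •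
          (EuclideanSpace.proj i : EuclideanSpace ℝ (Fin N) →L[ℝ] ℝ)))) +
       ((∑ i, r i * Real.sin (φ i)) • (∑ i, r i • ((Real.cos (φ i)) •
          (EuclideanSpace.proj i : EuclideanSpace ℝ (Fin N) →L[ℝ] ℝ)))
        + (∑ i, r i * Real.sin (φ i)) • (∑ i, r i • ((Real.cos (φ i)) •
          (EuclideanSpace.proj i : EuclideanSpace ℝ (Fin N) →L[ℝ] ℝ)))) with hL
  -- value of L on a vector
  have hLapp : ∀ v : EuclideanSpace ℝ (Fin N), L v =
      ∑ i, (2 * S.im * (r i * Real.cos (φ i)) - 2 * S.re * (r i * Real.sin (φ i))) * v i := by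
    intro v
    have hSre : S.re = ∑ i, r i * Real.cos (φ i) := by rw [hS]; exact hre φ
    have hSim : S.im = ∑ i, r i * Real.sin (φ i) := by rw [hS]; exact him φ
    rw [hL, ← hSre, ← hSim]
    simp only [ContinuousLinearMap.add_apply, ContinuousLinearMap.smul_apply,
      ContinuousLinearMap.sum_apply, PiLp.proj_apply, smul_eq_mul, Finset.mul_sum]
    rw [← Finset.sum_add_distrib, ← Finset.sum_add_distrib, ← Finset.sum_add_distrib]
    refine Finset.sum_congr rfl fun i _ => ?_
    ring
  -- the key coefficient identity
  have hcoef : ∀ k, 2 * S.im * (r k * Real.cos (φ k)) - 2 * S.re * (r k * Real.sin (φ k))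
      = -2 * r k * (‖c k‖ * Real.sin (φ k - Complex.arg (c k))) := by
    intro k
    have h1 : S.re = ‖c k‖ * Real.cos (Complex.arg (c k)) + r k * Real.cos (φ k) := by
      rw [hSc k]
      simp [Complex.add_re, Complex.mul_re, Complex.exp_ofReal_mul_I_re,
        Complex.exp_ofReal_mul_I_im, Complex.norm_mul_cos_arg]
    have h2 : S.im = ‖c k‖ * Real.sin (Complex.arg (c k)) + r k * Real.sin (φ k) := by
      rw [hSc k]
      simp [Complex.add_im, Complex.mul_im, Complex.exp_ofReal_mul_I_re,
        Complex.exp_ofReal_mul_I_im, Complex.norm_mul_sin_arg]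
    rw [h1, h2, Real.sin_sub]
    ring
  have hiff : ∀ k,
      (2 * S.im * (r k * Real.cos (φ k)) - 2 * S.re * (r k * Real.sin (φ k)) = 0)
      ↔ (c k = 0 ∨ Real.sin (φ k - Complex.arg (c k)) = 0) := by
    intro k
    rw [hcoef k]
    constructor
    · intro h
      rcases mul_eq_zero.1 h with h' | h'
      · exfalso; linarith [hr k]
      · rcases mul_eq_zero.1 h' with h'' | h''
        · exact Or.inl (norm_eq_zero.1 h'')
        · exact Or.inr h''
    · rintro (h | h)
      · simp [h]
      · simp [h]
  constructor
  · intro h k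
    have happ := congrArg (fun f : EuclideanSpace ℝ (Fin N) →L[ℝ] ℝ =>
      f (EuclideanSpace.single k 1)) h
    simp only [ContinuousLinearMap.zero_apply] at happ
    rw [hLapp] at happ
    rw [Finset.sum_eq_single k] at happ
    · refine (hiff k).1 ?_
      simpa using happ
    · intro i _ hik
      simp [EuclideanSpace.single_apply, hik]
    · intro h'
      exact absurd (Finset.mem_univ k) h'
  · intro h
    refine ContinuousLinearMap.ext fun v => ?_
    rw [hLapp, ContinuousLinearMap.zero_apply]
    refine Finset.sum_eq_zero fun i _ => ?_
    rw [(hiff i).2 (h i)]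
    ring
end

section
/- Let N ∈ ℕ and r : Fin N → ℝ with r_i > 0 for all i, and define PWR : EuclideanSpace ℝ (Fin N) → ℝ by PWR(φ) = |∑_i r_i · exp(φ_i · I)|². If φ is a critical point of PWR (fderiv ℝ PWR φ = 0) and PWR(φ) is strictly greater than the infimum of PWR over EuclideanSpace ℝ (Fin N), then all the vectors r_i · exp(φ_i · I) are aligned on one axis: for all i, l ∈ Fin N there exists k ∈ ℤ with φ_i = φ_l + k·π (equivalently, sin(φ_i − φ_l) = 0 for all i, l). (Paper's Lemma 6.) -/
open Complex Real

/-- Paper's Lemma 6: at a critical point of `PWR` that is not a global minimum,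
all the vectors `r i · exp(φ i · I)` are aligned on one axis. -/
theorem critical_point_not_min_aligned (N : ℕ) (r : Fin N → ℝ) (hr : ∀ i, 0 < r i)
    (PWR : EuclideanSpace ℝ (Fin N) → ℝ)
    (hPWR : ∀ φ : EuclideanSpace ℝ (Fin N),
      PWR φ = ‖∑ i, (r i : ℂ) * Complex.exp ((φ i : ℂ) * Complex.I)‖ ^ 2)
    (φ : EuclideanSpace ℝ (Fin N))
    (hcrit : fderiv ℝ PWR φ = 0)
    (hmin : (⨅ ψ : EuclideanSpace ℝ (Fin N), PWR ψ) < PWR φ) :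
    ∀ i l : Fin N, ∃ k : ℤ, φ i = φ l + k * Real.pi := by
  -- rewrite PWR in real terms
  have hPWR' : PWR = fun ψ : EuclideanSpace ℝ (Fin N) =>
      (∑ j, r j * Real.cos (ψ j)) * (∑ j, r j * Real.cos (ψ j))
        + (∑ j, r j * Real.sin (ψ j)) * (∑ j, r j * Real.sin (ψ j)) := by
    funext ψ
    rw [hPWR, Complex.sq_norm, Complex.normSq_apply, Complex.re_sum, Complex.im_sum]
    simp [Complex.exp_ofReal_mul_I_re, Complex.exp_ofReal_mul_I_im]
  set A : ℝ := ∑ j, r j * Real.cos (φ j) with hA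
  set B : ℝ := ∑ j, r j * Real.sin (φ j) with hB
  -- derivatives
  have hproj : ∀ j : Fin N, HasFDerivAt (𝕜 := ℝ) (fun ψ : EuclideanSpace ℝ (Fin N) => (ψ j : ℝ))
      (EuclideanSpace.proj j) φ := fun j => (EuclideanSpace.proj (𝕜 := ℝ) j).hasFDerivAt
  have hCd : HasFDerivAt (fun ψ : EuclideanSpace ℝ (Fin N) => ∑ j, r j * Real.cos (ψ j))
      (∑ j, (-(r j * Real.sin (φ j))) • (EuclideanSpace.proj j : EuclideanSpace ℝ (Fin N) →L[ℝ] ℝ)) φ := by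
    refine HasFDerivAt.fun_sum fun j _ => ?_
    have h2 := (Real.hasDerivAt_cos (φ j)).comp_hasFDerivAt φ (hproj j)
    have h3 := h2.const_mul (r j)
    refine h3.congr_fderiv ?_
    ext v
    simp [Function.comp]
    ring
  have hSd : HasFDerivAt (fun ψ : EuclideanSpace ℝ (Fin N) => ∑ j, r j * Real.sin (ψ j))
      (∑ j, (r j * Real.cos (φ j)) • (EuclideanSpace.proj j : EuclideanSpace ℝ (Fin N) →L[ℝ] ℝ)) φ := by
    refine HasFDerivAt.fun_sum fun j _ => ?_
    have h2 := (Real.hasDerivAt_sin (φ j)).comp_hasFDerivAt φ (hproj j)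
    have h3 := h2.const_mul (r j)
    refine h3.congr_fderiv ?_
    ext v
    simp [Function.comp]
    ring
  have hPd : HasFDerivAt PWR
      ((2 * A) • (∑ j, (-(r j * Real.sin (φ j))) • (EuclideanSpace.proj j : EuclideanSpace ℝ (Fin N) →L[ℝ] ℝ))
        + (2 * B) • (∑ j, (r j * Real.cos (φ j)) • (EuclideanSpace.proj j : EuclideanSpace ℝ (Fin N) →L[ℝ] ℝ))) φ := by
    rw [hPWR']
    have h1 := (hCd.mul hCd).add (hSd.mul hSd)
    refine h1.congr_fderiv ?_
    ext v
    simp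
    ring
  have hL0 := hPd.fderiv
  rw [hcrit] at hL0
  -- evaluate at basis vectors
  have hkey : ∀ m : Fin N, A * Real.sin (φ m) = B * Real.cos (φ m) := by
    intro m
    have := congrArg (fun L : EuclideanSpace ℝ (Fin N) →L[ℝ] ℝ =>
      L (EuclideanSpace.single m 1)) hL0.symm
    simp only [ContinuousLinearMap.zero_apply, ContinuousLinearMap.add_apply,
      ContinuousLinearMap.smul_apply, ContinuousLinearMap.sum_apply] at this
    have hev : ∀ j : Fin N, (EuclideanSpace.proj j : EuclideanSpace ℝ (Fin N) →L[ℝ] ℝ)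
        (EuclideanSpace.single m 1) = if j = m then 1 else 0 := by
      intro j; simp [EuclideanSpace.single_apply]
    simp only [hev, smul_eq_mul, mul_ite, mul_one, mul_zero,
      Finset.sum_ite_eq', Finset.mem_univ, if_true] at this
    have hrm := (hr m).ne'
    have h2 : r m * (B * Real.cos (φ m) - A * Real.sin (φ m)) = 0 := by
      linear_combination this / 2
    rcases mul_eq_zero.mp h2 with h3 | h3
    · exact absurd h3 hrm
    · linarith
  -- A, B not both zero
  have hAB : A ≠ 0 ∨ B ≠ 0 := by
    by_contra h
    push_neg at h
    have h0 : PWR φ = 0 := by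
      rw [hPWR']
      simp only [← hA, ← hB, h.1, h.2, mul_zero, add_zero]
    have h1 : 0 ≤ ⨅ ψ : EuclideanSpace ℝ (Fin N), PWR ψ := by
      apply Real.iInf_nonneg
      intro ψ; rw [hPWR]; positivity
    rw [h0] at hmin; linarith
  intro i l
  have hs : Real.sin (φ i - φ l) = 0 := by
    rw [Real.sin_sub]
    have h1 := hkey i
    have h2 := hkey l
    rcases hAB with hA0 | hB0
    · have : A * (Real.sin (φ i) * Real.cos (φ l) - Real.cos (φ i) * Real.sin (φ l)) = 0 := by
        linear_combination Real.cos (φ l) * h1 - Real.cos (φ i) * h2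
      have := mul_eq_zero.mp this
      tauto
    · have : B * (Real.sin (φ i) * Real.cos (φ l) - Real.cos (φ i) * Real.sin (φ l)) = 0 := by
        linear_combination Real.sin (φ l) * h1 - Real.sin (φ i) * h2
      have := mul_eq_zero.mp this
      tauto
  obtain ⟨k, hk⟩ := Real.sin_eq_zero_iff.mp hs
  exact ⟨k, by linarith⟩
end

section
/- Let N ∈ ℕ and r : Fin N → ℝ with r_i > 0 for all i, and define PWR : EuclideanSpace ℝ (Fin N) → ℝ by PWR(φ) = |∑_i r_i · exp(φ_i · I)|². If φ is a critical point of PWR (fderiv ℝ PWR φ = 0) and PWR(φ) is strictly greater than the infimum of PWR over EuclideanSpace ℝ (Fin N), then φ is a strict saddle point: there exists a direction v ∈ EuclideanSpace ℝ (Fin N) along which the second derivative of PWR at φ is strictly negative, i.e. iteratedFDeriv ℝ 2 PWR φ evaluated at (v, v) is < 0. (Paper's Lemma 7: every critical point not achieving the global minimum is a strict saddle.) -/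
open Complex Real

noncomputable def irsD {N : ℕ} (r : Fin N → ℝ) (ψ : EuclideanSpace ℝ (Fin N)) :
    EuclideanSpace ℝ (Fin N) →L[ℝ] ℝ :=
  (2 * ∑ i, r i * Real.cos (ψ i)) •
      (∑ i, (-(r i * Real.sin (ψ i))) • (EuclideanSpace.proj i : EuclideanSpace ℝ (Fin N) →L[ℝ] ℝ)) +
  (2 * ∑ i, r i * Real.sin (ψ i)) •
      (∑ i, (r i * Real.cos (ψ i)) • (EuclideanSpace.proj i : EuclideanSpace ℝ (Fin N) →L[ℝ] ℝ))

lemma irs_hasFDerivAt_cos {N : ℕ} (a : Fin N → ℝ) (ψ : EuclideanSpace ℝ (Fin N)) :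
    HasFDerivAt (fun ψ : EuclideanSpace ℝ (Fin N) => ∑ i, a i * Real.cos (ψ i))
      (∑ i, (-(a i * Real.sin (ψ i))) • (EuclideanSpace.proj i : EuclideanSpace ℝ (Fin N) →L[ℝ] ℝ)) ψ := by
  apply HasFDerivAt.fun_sum
  intro i _
  have h1 : HasFDerivAt (fun ψ : EuclideanSpace ℝ (Fin N) => ψ i)
      (EuclideanSpace.proj i : EuclideanSpace ℝ (Fin N) →L[ℝ] ℝ) ψ := by
    exact (EuclideanSpace.proj (𝕜 := ℝ) i).hasFDerivAt
  have h3 := ((Real.hasDerivAt_cos (ψ i)).comp_hasFDerivAt ψ h1).const_mul (a i)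
  refine h3.congr_fderiv ?_
  rw [smul_smul]; ring_nf

lemma irs_hasFDerivAt_sin {N : ℕ} (a : Fin N → ℝ) (ψ : EuclideanSpace ℝ (Fin N)) :
    HasFDerivAt (fun ψ : EuclideanSpace ℝ (Fin N) => ∑ i, a i * Real.sin (ψ i))
      (∑ i, (a i * Real.cos (ψ i)) • (EuclideanSpace.proj i : EuclideanSpace ℝ (Fin N) →L[ℝ] ℝ)) ψ := by
  apply HasFDerivAt.fun_sum
  intro i _
  have h1 : HasFDerivAt (fun ψ : EuclideanSpace ℝ (Fin N) => ψ i)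
      (EuclideanSpace.proj i : EuclideanSpace ℝ (Fin N) →L[ℝ] ℝ) ψ := by
    exact (EuclideanSpace.proj (𝕜 := ℝ) i).hasFDerivAt
  have h3 := ((Real.hasDerivAt_sin (ψ i)).comp_hasFDerivAt ψ h1).const_mul (a i)
  refine h3.congr_fderiv ?_
  rw [smul_smul]

lemma irs_hasFDerivAt_F {N : ℕ} (r : Fin N → ℝ) (ψ : EuclideanSpace ℝ (Fin N)) :
    HasFDerivAt (fun ψ : EuclideanSpace ℝ (Fin N) =>
        (∑ i, r i * Real.cos (ψ i))^2 + (∑ i, r i * Real.sin (ψ i))^2) (irsD r ψ) ψ := by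
  have hX := irs_hasFDerivAt_cos r ψ
  have hY := irs_hasFDerivAt_sin r ψ
  have h := (hX.fun_mul hX).fun_add (hY.fun_mul hY)
  refine (h.congr_of_eventuallyEq ?_).congr_fderiv ?_
  · exact Filter.EventuallyEq.of_eq (by funext ψ; ring)
  · unfold irsD; module

lemma irsD_apply {N : ℕ} (r : Fin N → ℝ) (ψ w : EuclideanSpace ℝ (Fin N)) :
    irsD r ψ w = 2 * (∑ i, r i * Real.cos (ψ i)) * (∑ i, -(r i * Real.sin (ψ i)) * w i)
      + 2 * (∑ i, r i * Real.sin (ψ i)) * (∑ i, r i * Real.cos (ψ i) * w i) := by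
  simp [irsD, ContinuousLinearMap.sum_apply, Finset.mul_sum, mul_assoc]

lemma irs_Q {N : ℕ} (r : Fin N → ℝ) (φ v : EuclideanSpace ℝ (Fin N)) :
    iteratedFDeriv ℝ 2 (fun ψ : EuclideanSpace ℝ (Fin N) =>
        (∑ i, r i * Real.cos (ψ i))^2 + (∑ i, r i * Real.sin (ψ i))^2) φ ![v, v] =
      2*(∑ i, -(r i * Real.sin (φ i)) * v i)^2 + 2*(∑ i, r i * Real.cos (φ i) * v i)^2
      + 2 * (∑ k, r k * Real.cos (φ k)) * (∑ i, -(r i * v i) * Real.cos (φ i) * v i)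
      + 2 * (∑ k, r k * Real.sin (φ k)) * (∑ i, -(r i * v i) * Real.sin (φ i) * v i) := by
  rw [iteratedFDeriv_two_apply]
  simp only [Matrix.cons_val_zero, Matrix.cons_val_one, Matrix.head_cons]
  have hfd : fderiv ℝ (fun ψ : EuclideanSpace ℝ (Fin N) =>
      (∑ i, r i * Real.cos (ψ i))^2 + (∑ i, r i * Real.sin (ψ i))^2) = fun ψ => irsD r ψ :=
    funext fun ψ => (irs_hasFDerivAt_F r ψ).fderiv
  rw [hfd]
  -- differentiability of irsD
  have hproj : ∀ i, DifferentiableAt ℝ (fun ψ : EuclideanSpace ℝ (Fin N) => ψ i) φ :=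
    fun i => (EuclideanSpace.proj (𝕜 := ℝ) i).differentiableAt
  have hsin : ∀ (a : Fin N → ℝ), DifferentiableAt ℝ
      (fun ψ : EuclideanSpace ℝ (Fin N) => ∑ i, a i * Real.sin (ψ i)) φ :=
    fun a => (irs_hasFDerivAt_sin a φ).differentiableAt
  have hcos : ∀ (a : Fin N → ℝ), DifferentiableAt ℝ
      (fun ψ : EuclideanSpace ℝ (Fin N) => ∑ i, a i * Real.cos (ψ i)) φ :=
    fun a => (irs_hasFDerivAt_cos a φ).differentiableAt
  have hDdiff : DifferentiableAt ℝ (fun ψ => irsD r ψ) φ := by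
    unfold irsD
    apply DifferentiableAt.add
    · apply DifferentiableAt.smul ((hcos r).const_mul 2)
      apply DifferentiableAt.fun_sum
      intro i _
      exact ((Real.differentiable_sin.differentiableAt.comp φ (hproj i)).const_mul (r i)).neg.smul_const _
    · apply DifferentiableAt.smul ((hsin r).const_mul 2)
      apply DifferentiableAt.fun_sum
      intro i _
      exact ((Real.differentiable_cos.differentiableAt.comp φ (hproj i)).const_mul (r i)).smul_const _
  have hflip : fderiv ℝ (fun ψ => irsD r ψ) φ v v
      = fderiv ℝ (fun ψ => irsD r ψ v) φ v := by
    have := fderiv_clm_apply (c := fun ψ => irsD r ψ) (u := fun _ => v) hDdiff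
      (differentiableAt_const v)
    rw [this]
    simp
  rw [hflip]
  have hfun : (fun ψ : EuclideanSpace ℝ (Fin N) => irsD r ψ v) = fun ψ =>
      2 * (∑ i, r i * Real.cos (ψ i)) * (∑ i, (-(r i * v i)) * Real.sin (ψ i))
      + 2 * (∑ i, r i * Real.sin (ψ i)) * (∑ i, (r i * v i) * Real.cos (ψ i)) := by
    funext ψ
    rw [irsD_apply]
    congr 1
    · congr 1
      exact Finset.sum_congr rfl (fun i _ => by ring)
    · congr 1
      exact Finset.sum_congr rfl (fun i _ => by ring)
  have hX := irs_hasFDerivAt_cos r φ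
  have hY := irs_hasFDerivAt_sin r φ
  have hA := irs_hasFDerivAt_sin (fun i => -(r i * v i)) φ
  have hB := irs_hasFDerivAt_cos (fun i => r i * v i) φ
  have hg := ((hX.const_mul 2).fun_mul hA).fun_add ((hY.const_mul 2).fun_mul hB)
  rw [hfun, hg.fderiv]
  simp only [ContinuousLinearMap.add_apply, ContinuousLinearMap.smul_apply,
    ContinuousLinearMap.sum_apply, PiLp.proj_apply, smul_eq_mul]
  have e1 : ∑ i, (-(r i * v i)) * Real.sin (φ i) = ∑ i, -(r i * Real.sin (φ i)) * v i :=
    Finset.sum_congr rfl (fun i _ => by ring)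
  have e2 : ∑ i, (r i * v i) * Real.cos (φ i) = ∑ i, r i * Real.cos (φ i) * v i :=
    Finset.sum_congr rfl (fun i _ => by ring)
  have e3 : ∑ i, (-(r i * v i)) * Real.cos (φ i) * v i = ∑ i, -(r i * v i) * Real.cos (φ i) * v i :=
    Finset.sum_congr rfl (fun i _ => by ring)
  have e4 : ∑ i, -((r i * v i) * Real.sin (φ i)) * v i = ∑ i, -(r i * v i) * Real.sin (φ i) * v i :=
    Finset.sum_congr rfl (fun i _ => by ring)
  rw [e1, e2, e3, e4]
  ring


set_option maxHeartbeats 1000000 in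
/-- Paper's Lemma 7: every critical point of `PWR` not achieving the global minimum
is a strict saddle point. -/
theorem critical_point_not_min_strict_saddle (N : ℕ) (r : Fin N → ℝ) (hr : ∀ i, 0 < r i)
    (PWR : EuclideanSpace ℝ (Fin N) → ℝ)
    (hPWR : ∀ φ : EuclideanSpace ℝ (Fin N),
      PWR φ = ‖∑ i, (r i : ℂ) * Complex.exp ((φ i : ℂ) * Complex.I)‖ ^ 2)
    (φ : EuclideanSpace ℝ (Fin N))
    (hcrit : fderiv ℝ PWR φ = 0)
    (hmin : (⨅ ψ : EuclideanSpace ℝ (Fin N), PWR ψ) < PWR φ) :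
    ∃ v : EuclideanSpace ℝ (Fin N), iteratedFDeriv ℝ 2 PWR φ ![v, v] < 0 := by
  classical
  have hF : PWR = fun ψ : EuclideanSpace ℝ (Fin N) =>
      (∑ i, r i * Real.cos (ψ i))^2 + (∑ i, r i * Real.sin (ψ i))^2 := by
    funext ψ
    rw [hPWR ψ, Complex.sq_norm, Complex.normSq_apply]
    simp [Complex.re_sum, Complex.im_sum, Complex.mul_re, Complex.mul_im,
      Complex.exp_ofReal_mul_I_re, Complex.exp_ofReal_mul_I_im, sq]
  simp only [hF] at hcrit hmin ⊢
  set X := ∑ i, r i * Real.cos (φ i) with hXdef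
  set Y := ∑ i, r i * Real.sin (φ i) with hYdef
  -- positivity of infimum
  have hinf0 : (0:ℝ) ≤ ⨅ ψ : EuclideanSpace ℝ (Fin N),
      ((∑ i, r i * Real.cos (ψ i))^2 + (∑ i, r i * Real.sin (ψ i))^2) :=
    le_ciInf fun ψ => by positivity
  have hpos : 0 < X^2 + Y^2 := lt_of_le_of_lt hinf0 hmin
  -- critical point relations
  have hD0 : irsD r φ = 0 := by
    rw [← (irs_hasFDerivAt_F r φ).fderiv]; exact hcrit
  have hrel : ∀ j, X * Real.sin (φ j) = Y * Real.cos (φ j) := by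
    intro j
    have h0 : irsD r φ (EuclideanSpace.single j 1) = 0 := by rw [hD0]; rfl
    rw [irsD_apply] at h0
    simp only [EuclideanSpace.single_apply, mul_ite, mul_one, mul_zero,
      Finset.sum_ite_eq', Finset.mem_univ, if_true] at h0
    have h2 : r j * (Y * Real.cos (φ j) - X * Real.sin (φ j)) = 0 := by
      linear_combination h0 / 2
    rcases mul_eq_zero.mp h2 with h | h
    · exact absurd h (ne_of_gt (hr j))
    · linarith
  set c : Fin N → ℝ := fun j => X * Real.cos (φ j) + Y * Real.sin (φ j) with hcdef
  have hcsq : ∀ j, c j ^ 2 = X^2 + Y^2 := by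
    intro j
    have h1 := Real.sin_sq_add_cos_sq (φ j)
    have h2 := hrel j
    simp only [hcdef]
    linear_combination (X^2+Y^2) * h1 - (X * Real.sin (φ j) - Y * Real.cos (φ j)) * h2
  have hXc : ∀ j, X * c j = (X^2+Y^2) * Real.cos (φ j) := by
    intro j; simp only [hcdef]; linear_combination Y * hrel j
  have hYc : ∀ j, Y * c j = (X^2+Y^2) * Real.sin (φ j) := by
    intro j; simp only [hcdef]; linear_combination (-X) * hrel j
  have hsumrc : ∑ j, r j * c j = X^2 + Y^2 := by
    have e : ∀ j ∈ Finset.univ, r j * c j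
        = X * (r j * Real.cos (φ j)) + Y * (r j * Real.sin (φ j)) := by
      intro j _; simp only [hcdef]; ring
    rw [Finset.sum_congr rfl e, Finset.sum_add_distrib, ← Finset.mul_sum, ← Finset.mul_sum,
      ← hXdef, ← hYdef]
    ring
  obtain ⟨p, hp⟩ : ∃ p, 0 < c p := by
    by_contra h
    push_neg at h
    have : ∑ j, r j * c j ≤ 0 :=
      Finset.sum_nonpos fun j _ => mul_nonpos_of_nonneg_of_nonpos (hr j).le (h j)
    linarith
  by_cases hq : ∃ q, q ≠ p ∧ 0 < c q
  · obtain ⟨q, hqp, hcq⟩ := hq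
    have hcpq : c p = c q := by
      have h3 : (c p - c q) * (c p + c q) = 0 := by linear_combination hcsq p - hcsq q
      rcases mul_eq_zero.mp h3 with h | h
      · linarith
      · linarith
    have hcos : Real.cos (φ p) = Real.cos (φ q) := by
      have h1 := hXc p
      rw [hcpq, hXc q] at h1
      exact (mul_left_cancel₀ (ne_of_gt hpos) h1).symm
    have hsin : Real.sin (φ p) = Real.sin (φ q) := by
      have h1 := hYc p
      rw [hcpq, hYc q] at h1
      exact (mul_left_cancel₀ (ne_of_gt hpos) h1).symm
    refine ⟨EuclideanSpace.single p (r q) - EuclideanSpace.single q (r p), ?_⟩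
    rw [irs_Q]
    set v : EuclideanSpace ℝ (Fin N) :=
      EuclideanSpace.single p (r q) - EuclideanSpace.single q (r p) with hvdef
    have hvap : ∀ i, v i = (if i = p then r q else 0) - (if i = q then r p else 0) := by
      intro i
      simp [hvdef, EuclideanSpace.single_apply]
    have hvp : v p = r q := by rw [hvap]; simp [hqp.symm]
    have hvq : v q = -(r p) := by rw [hvap]; simp [hqp]
    have hsum : ∀ f : Fin N → ℝ, ∑ i, f i * v i = f p * r q - f q * r p := by
      intro f
      have e : ∀ i ∈ Finset.univ, f i * v i
          = (if i = p then f p * r q else 0) + (if i = q then f q * (-(r p)) else 0) := by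
        intro i _
        rcases eq_or_ne i p with h | h
        · subst h
          rw [hvp]
          simp [Ne.symm hqp]
        · rcases eq_or_ne i q with h2 | h2
          · subst h2
            rw [hvq]
            simp [h]
          · rw [hvap]
            simp [h, h2]
      rw [Finset.sum_congr rfl e, Finset.sum_add_distrib]
      simp [Finset.sum_ite_eq']
      ring
    rw [hsum, hsum, hsum, hsum, hvp, hvq, hcos, hsin, ← hXdef, ← hYdef]
    have hc' : 0 < X * Real.cos (φ q) + Y * Real.sin (φ q) := hcq
    nlinarith [mul_pos (mul_pos (mul_pos (hr p) (hr q))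
      (by linarith [hr p, hr q] : (0:ℝ) < r p + r q)) hc', sq_nonneg (Real.sin (φ q)),
      sq_nonneg (Real.cos (φ q))]
  · exfalso
    push_neg at hq
    have hcne : ∀ j, c j ≠ 0 := by
      intro j h
      rw [← hcsq j, h] at hpos
      simp at hpos
    have hcneg : ∀ q, q ≠ p → c q = - c p := by
      intro q hqp
      have h3 : (c q - c p) * (c q + c p) = 0 := by linear_combination hcsq q - hcsq p
      have hcq : c q < 0 := lt_of_le_of_ne (hq q hqp) (hcne q)
      rcases mul_eq_zero.mp h3 with h | h
      · linarith
      · linarith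
    have hrp : r p - ∑ i ∈ Finset.univ.erase p, r i = c p := by
      have h1 : ∑ j, r j * c j = r p * c p + ∑ i ∈ Finset.univ.erase p, r i * c i :=
        (Finset.add_sum_erase _ _ (Finset.mem_univ p)).symm
      have h2 : ∑ i ∈ Finset.univ.erase p, r i * c i
          = -(c p) * ∑ i ∈ Finset.univ.erase p, r i := by
        rw [Finset.mul_sum]
        refine Finset.sum_congr rfl fun i hi => ?_
        rw [hcneg i (Finset.ne_of_mem_erase hi)]
        ring
      have h4 : c p * (r p - ∑ i ∈ Finset.univ.erase p, r i) = c p * c p := by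
        rw [← hcsq p] at hsumrc
        rw [h1, h2] at hsumrc
        nlinarith [hsumrc]
      have := mul_left_cancel₀ (hcne p) h4
      linarith [this]
    -- lower bound on PWR everywhere
    have hlb : ∀ ψ : EuclideanSpace ℝ (Fin N),
        (c p)^2 ≤ (∑ i, r i * Real.cos (ψ i))^2 + (∑ i, r i * Real.sin (ψ i))^2 := by
      intro ψ
      have habs : c p ≤ ‖∑ i, (r i : ℂ) * Complex.exp ((ψ i : ℂ) * Complex.I)‖ := by
        rw [← Finset.add_sum_erase _ _ (Finset.mem_univ p)]
        have h1 : ‖(r p : ℂ) * Complex.exp ((ψ p : ℂ) * Complex.I)‖ = r p := by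
          rw [norm_mul, Complex.norm_exp_ofReal_mul_I, Complex.norm_of_nonneg (hr p).le,
            mul_one]
        have h2 : ‖∑ i ∈ Finset.univ.erase p,
            (r i : ℂ) * Complex.exp ((ψ i : ℂ) * Complex.I)‖
            ≤ ∑ i ∈ Finset.univ.erase p, r i := by
          refine le_trans (norm_sum_le _ _) ?_
          refine Finset.sum_le_sum fun i _ => ?_
          rw [norm_mul, Complex.norm_exp_ofReal_mul_I, Complex.norm_of_nonneg (hr i).le,
            mul_one]
        have h3 := norm_add_le
          ((r p : ℂ) * Complex.exp ((ψ p : ℂ) * Complex.I) + ∑ i ∈ Finset.univ.erase p,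
            (r i : ℂ) * Complex.exp ((ψ i : ℂ) * Complex.I))
          (-(∑ i ∈ Finset.univ.erase p, (r i : ℂ) * Complex.exp ((ψ i : ℂ) * Complex.I)))
        simp only [add_neg_cancel_right, norm_neg] at h3
        linarith [h3, h1 ▸ le_refl (r p), hrp]
      have h5 : (c p)^2 ≤ ‖∑ i, (r i : ℂ) * Complex.exp ((ψ i : ℂ) * Complex.I)‖^2 :=
        pow_le_pow_left₀ hp.le habs 2
      calc (c p)^2 ≤ _ := h5
        _ = _ := by
          rw [Complex.sq_norm, Complex.normSq_apply]
          simp [Complex.re_sum, Complex.im_sum, Complex.mul_re, Complex.mul_im,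
            Complex.exp_ofReal_mul_I_re, Complex.exp_ofReal_mul_I_im, sq]
    have hle : X^2 + Y^2 ≤ ⨅ ψ : EuclideanSpace ℝ (Fin N),
        ((∑ i, r i * Real.cos (ψ i))^2 + (∑ i, r i * Real.sin (ψ i))^2) := by
      rw [← hcsq p]
      exact le_ciInf hlb
    exact absurd hmin (not_lt.mpr hle)
end

section
/- Let N ∈ ℕ and r : Fin N → ℝ with r_i > 0 for all i, and define PWR : EuclideanSpace ℝ (Fin N) → ℝ by PWR(φ) = |∑_i r_i · exp(φ_i · I)|². Then every critical point φ of PWR (fderiv ℝ PWR φ = 0) either achieves the global minimum, PWR(φ) = ⨅_ψ PWR(ψ), or is a strict saddle point: there exists v ∈ EuclideanSpace ℝ (Fin N) with iteratedFDeriv ℝ 2 PWR φ evaluated at (v, v) strictly negative. (Paper's Corollary 1: PWR_w is a strict saddle function with no spurious local minima.) -/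
open Complex Real

namespace PWRAux

open Finset

variable {N : ℕ}

noncomputable def lm (j k : Fin N) : EuclideanSpace ℝ (Fin N) →L[ℝ] ℝ :=
  EuclideanSpace.proj j - EuclideanSpace.proj k

@[simp] lemma lm_apply (j k : Fin N) (φ : EuclideanSpace ℝ (Fin N)) :
    lm j k φ = φ j - φ k := rfl

noncomputable def F (r : Fin N → ℝ) (φ : EuclideanSpace ℝ (Fin N)) : ℝ :=
  ∑ j, ∑ k, r j * r k * Real.cos (φ j - φ k)

noncomputable def L (r : Fin N → ℝ) (φ : EuclideanSpace ℝ (Fin N)) :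
    EuclideanSpace ℝ (Fin N) →L[ℝ] ℝ :=
  ∑ j, ∑ k, (r j * r k * -Real.sin (φ j - φ k)) • lm j k

lemma hasFDerivAt_F (r : Fin N → ℝ) (φ : EuclideanSpace ℝ (Fin N)) :
    HasFDerivAt (F r) (L r φ) φ := by
  apply HasFDerivAt.fun_sum; intro j _
  apply HasFDerivAt.fun_sum; intro k _
  have h1 : HasFDerivAt (fun ψ : EuclideanSpace ℝ (Fin N) => Real.cos (lm j k ψ))
      (-Real.sin (lm j k φ) • lm j k) φ := ((lm j k).hasFDerivAt).cos
  have h2 := h1.const_mul (r j * r k)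
  simp only [lm_apply] at h2 ⊢
  rw [smul_smul] at h2
  exact h2

noncomputable def M (r : Fin N → ℝ) (φ : EuclideanSpace ℝ (Fin N)) :
    EuclideanSpace ℝ (Fin N) →L[ℝ] (EuclideanSpace ℝ (Fin N) →L[ℝ] ℝ) :=
  ∑ j, ∑ k, ((r j * r k * -Real.cos (φ j - φ k)) • lm j k).smulRight (lm j k)

lemma hasFDerivAt_L (r : Fin N → ℝ) (φ : EuclideanSpace ℝ (Fin N)) :
    HasFDerivAt (L r) (M r φ) φ := by
  apply HasFDerivAt.fun_sum; intro j _
  apply HasFDerivAt.fun_sum; intro k _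
  have h1 : HasFDerivAt (fun ψ : EuclideanSpace ℝ (Fin N) => r j * r k * -Real.sin (lm j k ψ))
      ((r j * r k * -Real.cos (lm j k φ)) • lm j k) φ := by
    have := (((lm j k).hasFDerivAt (x := φ)).sin.neg).const_mul (r j * r k)
    rw [smul_neg, smul_smul, ← neg_smul, ← mul_neg] at this
    exact this
  have h2 := h1.smul_const (lm j k)
  simp only [lm_apply] at h2 ⊢
  exact h2

lemma fderiv_F (r : Fin N → ℝ) : fderiv ℝ (F r) = L r :=
  funext fun φ => (hasFDerivAt_F r φ).fderiv

lemma iterated2 (r : Fin N → ℝ) (φ v : EuclideanSpace ℝ (Fin N)) :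
    iteratedFDeriv ℝ 2 (F r) φ ![v, v]
      = ∑ j, ∑ k, (r j * r k * -Real.cos (φ j - φ k)) * (v j - v k) ^ 2 := by
  rw [iteratedFDeriv_two_apply, fderiv_F, (hasFDerivAt_L r φ).fderiv]
  simp only [M, ContinuousLinearMap.sum_apply, ContinuousLinearMap.smulRight_apply,
    ContinuousLinearMap.smul_apply, lm_apply, Matrix.cons_val_zero, Matrix.cons_val_one,
    Matrix.head_cons, smul_eq_mul]
  congr 1; ext j; congr 1; ext k; ring

lemma crit (r : Fin N → ℝ) (hr : ∀ i, 0 < r i) (φ : EuclideanSpace ℝ (Fin N))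
    (h : L r φ = 0) (a : Fin N) :
    (∑ k, r k * Real.sin (φ k)) * Real.cos (φ a)
      - (∑ k, r k * Real.cos (φ k)) * Real.sin (φ a) = 0 := by
  have h0 : L r φ (EuclideanSpace.single a 1) = 0 := by rw [h]; rfl
  simp only [L, ContinuousLinearMap.sum_apply, ContinuousLinearMap.smul_apply, lm_apply,
    EuclideanSpace.single_apply, smul_eq_mul] at h0
  simp only [mul_sub, mul_ite, mul_one, mul_zero, Finset.sum_sub_distrib,
    Finset.sum_ite_eq', Finset.mem_univ, if_true] at h0
  have hsplit : ∀ x : Fin N, (∑ x_1 : Fin N, if x = a then r x * r x_1 * -Real.sin (φ x - φ x_1) else 0)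
      = if x = a then ∑ x_1 : Fin N, r x * r x_1 * -Real.sin (φ x - φ x_1) else 0 := by
    intro x; split <;> simp
  simp only [hsplit, Finset.sum_ite_eq', Finset.mem_univ, if_true] at h0
  have flip : ∀ x y : ℝ, -Real.sin (x - y) = Real.sin (y - x) := by
    intro x y; rw [← Real.sin_neg, neg_sub]
  have hA : (∑ k, r a * r k * -Real.sin (φ a - φ k))
      = r a * ∑ k, r k * Real.sin (φ k - φ a) := by
    rw [Finset.mul_sum]; apply Finset.sum_congr rfl; intro k _; rw [flip]; ring
  have hB : (∑ k, r k * r a * -Real.sin (φ k - φ a))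
      = -(r a * ∑ k, r k * Real.sin (φ k - φ a)) := by
    rw [Finset.mul_sum, ← Finset.sum_neg_distrib]
    apply Finset.sum_congr rfl; intro k _; ring
  rw [hA, hB] at h0
  have hS : r a * (∑ k, r k * Real.sin (φ k - φ a)) = 0 := by linarith
  have hS0 : (∑ k, r k * Real.sin (φ k - φ a)) = 0 := by
    rcases mul_eq_zero.mp hS with h' | h'
    · exact absurd h' (ne_of_gt (hr a))
    · exact h'
  have e1 : (∑ k, r k * Real.sin (φ k - φ a))
      = (∑ k, r k * Real.sin (φ k)) * Real.cos (φ a)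
        - (∑ k, r k * Real.cos (φ k)) * Real.sin (φ a) := by
    rw [Finset.sum_mul, Finset.sum_mul, ← Finset.sum_sub_distrib]
    apply Finset.sum_congr rfl; intro k _; rw [Real.sin_sub]; ring
  rw [← e1]; exact hS0

lemma sum_sq_expand (w v : Fin N → ℝ) :
    ∑ j, ∑ k, w j * w k * (v j - v k) ^ 2
      = 2 * (∑ j, w j) * (∑ j, w j * v j ^ 2) - 2 * (∑ j, w j * v j) ^ 2 := by
  have e1 := Fintype.sum_mul_sum (fun j => w j * v j ^ 2) (fun k => w k)
  have e2 := Fintype.sum_mul_sum (fun j => w j) (fun k => w k * v k ^ 2)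
  have e3 := Fintype.sum_mul_sum (fun j => w j * v j) (fun k => w k * v k)
  have comb : ∀ j k : Fin N, w j * w k * (v j - v k) ^ 2
      = (w j * v j ^ 2 * w k + w j * (w k * v k ^ 2)) - 2 * (w j * v j * (w k * v k)) := by
    intro j k; ring
  simp_rw [comb, Finset.sum_sub_distrib, Finset.sum_add_distrib]
  have e4 : (∑ j : Fin N, ∑ k : Fin N, 2 * (w j * v j * (w k * v k)))
      = 2 * ∑ j : Fin N, ∑ k : Fin N, w j * v j * (w k * v k) := by
    rw [Finset.mul_sum]; apply Finset.sum_congr rfl; intro j _; rw [Finset.mul_sum]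
  rw [← e1, ← e2, e4, ← e3]
  ring

lemma PWR_eq (r : Fin N → ℝ) (ψ : EuclideanSpace ℝ (Fin N)) :
    (‖∑ i, (r i : ℂ) * Complex.exp ((ψ i : ℂ) * Complex.I)‖) ^ 2
      = (∑ k, r k * Real.cos (ψ k)) ^ 2 + (∑ k, r k * Real.sin (ψ k)) ^ 2 := by
  rw [Complex.sq_norm, Complex.normSq_apply, Complex.re_sum, Complex.im_sum]
  simp only [Complex.mul_re, Complex.mul_im, Complex.ofReal_re, Complex.ofReal_im,
    Complex.exp_ofReal_mul_I_re, Complex.exp_ofReal_mul_I_im, zero_mul, sub_zero, add_zero]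
  ring

lemma F_eq (r : Fin N → ℝ) (ψ : EuclideanSpace ℝ (Fin N)) :
    F r ψ = (∑ k, r k * Real.cos (ψ k)) ^ 2 + (∑ k, r k * Real.sin (ψ k)) ^ 2 := by
  have h : ∀ j k : Fin N, r j * r k * Real.cos (ψ j - ψ k)
      = (r j * Real.cos (ψ j)) * (r k * Real.cos (ψ k))
        + (r j * Real.sin (ψ j)) * (r k * Real.sin (ψ k)) := by
    intro j k; rw [Real.cos_sub]; ring
  have e1 := Fintype.sum_mul_sum (fun j => r j * Real.cos (ψ j)) (fun k => r k * Real.cos (ψ k))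
  have e2 := Fintype.sum_mul_sum (fun j => r j * Real.sin (ψ j)) (fun k => r k * Real.sin (ψ k))
  unfold F
  simp_rw [h, Finset.sum_add_distrib]
  rw [pow_two, pow_two, e1, e2]

end PWRAux

set_option maxHeartbeats 1000000 in
/-- Paper's Corollary 1: `PWR` is a strict saddle function: every critical point either
achieves the global minimum or is a strict saddle point. -/
theorem PWR_strict_saddle_function (N : ℕ) (r : Fin N → ℝ) (hr : ∀ i, 0 < r i)
    (PWR : EuclideanSpace ℝ (Fin N) → ℝ)
    (hPWR : ∀ φ : EuclideanSpace ℝ (Fin N),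
      PWR φ = (‖∑ i, (r i : ℂ) * Complex.exp ((φ i : ℂ) * Complex.I)‖) ^ 2) :
    ∀ φ : EuclideanSpace ℝ (Fin N), fderiv ℝ PWR φ = 0 →
      PWR φ = (⨅ ψ : EuclideanSpace ℝ (Fin N), PWR ψ) ∨
      ∃ v : EuclideanSpace ℝ (Fin N), iteratedFDeriv ℝ 2 PWR φ ![v, v] < 0 := by
  intro φ hcrit
  have hPWRF : PWR = PWRAux.F r := by
    funext ψ; rw [hPWR ψ, PWRAux.PWR_eq r ψ, ← PWRAux.F_eq r ψ]
  have hL0 : PWRAux.L r φ = 0 := by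
    have h1 : fderiv ℝ (PWRAux.F r) φ = 0 := by rw [← hPWRF]; exact hcrit
    rw [PWRAux.fderiv_F] at h1; exact h1
  have hs := fun a => PWRAux.crit r hr φ hL0 a
  obtain ⟨Cc, hCcd⟩ : ∃ x : ℝ, x = ∑ k, r k * Real.cos (φ k) := ⟨_, rfl⟩
  obtain ⟨Ss, hSsd⟩ : ∃ x : ℝ, x = ∑ k, r k * Real.sin (φ k) := ⟨_, rfl⟩
  simp only [← hCcd, ← hSsd] at hs
  set cF : Fin N → ℝ := fun a => Cc * Real.cos (φ a) + Ss * Real.sin (φ a) with hcF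
  have hca : ∀ a, cF a ^ 2 = Cc ^ 2 + Ss ^ 2 := by
    intro a; have h := hs a; have h2 := Real.sin_sq_add_cos_sq (φ a)
    simp only [hcF]
    linear_combination (Cc * Real.sin (φ a) - Ss * Real.cos (φ a)) * h + (Cc ^ 2 + Ss ^ 2) * h2
  have hck : ∀ j k, cF j * cF k = (Cc ^ 2 + Ss ^ 2) * Real.cos (φ j - φ k) := by
    intro j k; have hj := hs j
    simp only [hcF]; rw [Real.cos_sub]
    linear_combination (Cc * Real.sin (φ k) - Ss * Real.cos (φ k)) * hj
  have hsumw : ∑ a, r a * cF a = Cc ^ 2 + Ss ^ 2 := by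
    simp only [hcF]
    have h : ∀ a : Fin N, r a * (Cc * Real.cos (φ a) + Ss * Real.sin (φ a))
        = Cc * (r a * Real.cos (φ a)) + Ss * (r a * Real.sin (φ a)) := fun a => by ring
    simp_rw [h]
    rw [Finset.sum_add_distrib, ← Finset.mul_sum, ← Finset.mul_sum, ← hCcd, ← hSsd]
    ring
  have hTnn : (0:ℝ) ≤ Cc ^ 2 + Ss ^ 2 := by positivity
  have hφval : PWR φ = Cc ^ 2 + Ss ^ 2 := by
    rw [hPWR φ, PWRAux.PWR_eq r φ, ← hCcd, ← hSsd]
  have hminlem : (∀ ψ, PWR φ ≤ PWR ψ) → PWR φ = ⨅ ψ, PWR ψ := by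
    intro hmin
    refine le_antisymm (le_ciInf hmin) (ciInf_le ⟨PWR φ, ?_⟩ φ)
    rintro x ⟨ψ, rfl⟩; exact hmin ψ
  rcases eq_or_lt_of_le hTnn with hT0 | hTpos
  · left
    apply hminlem; intro ψ
    rw [hφval, ← hT0, hPWR ψ]; positivity
  · have hex : ∃ a, 0 < cF a := by
      by_contra hno; push_neg at hno
      have hle : ∑ a, r a * cF a ≤ 0 :=
        Finset.sum_nonpos fun a _ => mul_nonpos_iff.mpr (Or.inl ⟨(hr a).le, hno a⟩)
      rw [hsumw] at hle; linarith
    obtain ⟨a, ha⟩ := hex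
    by_cases hb : ∃ b, b ≠ a ∧ 0 < cF b
    · right
      obtain ⟨b, hba, hcb⟩ := hb
      set w : Fin N → ℝ := fun j => r j * cF j with hwd
      refine ⟨EuclideanSpace.single a (w b) - EuclideanSpace.single b (w a), ?_⟩
      rw [hPWRF, PWRAux.iterated2]
      set vv : Fin N → ℝ := fun j => (if j = a then w b else 0) - (if j = b then w a else 0)
        with hvvd
      have hvx : ∀ j, (EuclideanSpace.single a (w b) - EuclideanSpace.single b (w a) :
          EuclideanSpace ℝ (Fin N)) j = vv j := by
        intro j; simp [hvvd, EuclideanSpace.single_apply]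
      simp only [hvx]
      have hwa : 0 < w a := mul_pos (hr a) ha
      have hwb : 0 < w b := mul_pos (hr b) hcb
      have hS1 : ∑ j, w j * vv j = 0 := by
        simp only [hvvd, mul_sub, mul_ite, mul_zero, Finset.sum_sub_distrib,
          Finset.sum_ite_eq', Finset.mem_univ, if_true]
        ring
      have hS2 : ∑ j, w j * vv j ^ 2 = w a * w b ^ 2 + w b * w a ^ 2 := by
        have hterm : ∀ j, w j * vv j ^ 2
            = (if j = a then w a * w b ^ 2 else 0) + (if j = b then w b * w a ^ 2 else 0) := by
          intro j
          simp only [hvvd]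
          split_ifs
          · rename_i h1 h2; exact absurd (h2.symm.trans h1) hba
          · rename_i h1 h2; subst h1; ring
          · rename_i h1 h2; subst h2; ring
          · ring
        simp_rw [hterm]
        rw [Finset.sum_add_distrib]
        simp [Finset.sum_ite_eq']
      have hWsum : ∑ j, w j = Cc ^ 2 + Ss ^ 2 := by simp only [hwd]; exact hsumw
      have key : (Cc ^ 2 + Ss ^ 2) * (∑ j, ∑ k,
            (r j * r k * -Real.cos (φ j - φ k)) * (vv j - vv k) ^ 2)
          = (Cc ^ 2 + Ss ^ 2) * (-(2 * (w a * w b ^ 2 + w b * w a ^ 2))) := by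
        have h1 : ∀ j k : Fin N, (Cc ^ 2 + Ss ^ 2) *
              ((r j * r k * -Real.cos (φ j - φ k)) * (vv j - vv k) ^ 2)
            = -(w j * w k * (vv j - vv k) ^ 2) := by
          intro j k; have hjk := hck j k
          simp only [hwd]
          linear_combination (r j * r k * (vv j - vv k) ^ 2) * hjk
        calc (Cc ^ 2 + Ss ^ 2) * (∑ j, ∑ k,
              (r j * r k * -Real.cos (φ j - φ k)) * (vv j - vv k) ^ 2)
            = ∑ j, ∑ k, (Cc ^ 2 + Ss ^ 2) *
              ((r j * r k * -Real.cos (φ j - φ k)) * (vv j - vv k) ^ 2) := by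
              rw [Finset.mul_sum]; apply Finset.sum_congr rfl; intro j _
              rw [Finset.mul_sum]
          _ = ∑ j, ∑ k, -(w j * w k * (vv j - vv k) ^ 2) := by
              apply Finset.sum_congr rfl; intro j _
              apply Finset.sum_congr rfl; intro k _
              exact h1 j k
          _ = -(∑ j, ∑ k, w j * w k * (vv j - vv k) ^ 2) := by
              rw [← Finset.sum_neg_distrib]
              apply Finset.sum_congr rfl; intro j _
              rw [← Finset.sum_neg_distrib]
          _ = -(2 * (∑ j, w j) * (∑ j, w j * vv j ^ 2) - 2 * (∑ j, w j * vv j) ^ 2) := by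
              rw [PWRAux.sum_sq_expand]
          _ = (Cc ^ 2 + Ss ^ 2) * (-(2 * (w a * w b ^ 2 + w b * w a ^ 2))) := by
              rw [hS1, hS2, hWsum]; ring
      have hQval : (∑ j, ∑ k, (r j * r k * -Real.cos (φ j - φ k)) * (vv j - vv k) ^ 2)
          = -(2 * (w a * w b ^ 2 + w b * w a ^ 2)) :=
        mul_left_cancel₀ (ne_of_gt hTpos) key
      rw [hQval]
      nlinarith [mul_pos hwa (mul_pos hwb hwb), mul_pos hwb (mul_pos hwa hwa)]
    · left
      push_neg at hb
      have hcbneg : ∀ b, b ≠ a → cF b = -(cF a) := by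
        intro b hbne
        have h1 := hca b; have h2 := hca a
        have h3 : (cF b - cF a) * (cF b + cF a) = 0 := by linear_combination h1 - h2
        rcases mul_eq_zero.mp h3 with h' | h'
        · have := hb b hbne; linarith
        · linarith
      have hkey : r a - ∑ b ∈ Finset.univ.erase a, r b = cF a := by
        have h1 := hsumw
        rw [← Finset.add_sum_erase _ (fun b => r b * cF b) (Finset.mem_univ a)] at h1
        have h2 : ∑ b ∈ Finset.univ.erase a, r b * cF b
            = -(cF a) * ∑ b ∈ Finset.univ.erase a, r b := by
          rw [Finset.mul_sum]; apply Finset.sum_congr rfl; intro b hbmem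
          rw [hcbneg b (Finset.ne_of_mem_erase hbmem)]; ring
        rw [h2] at h1
        have h3 := hca a
        have h4 : cF a * (r a - (∑ b ∈ Finset.univ.erase a, r b) - cF a) = 0 := by
          linear_combination h1 - h3
        rcases mul_eq_zero.mp h4 with h' | h'
        · exact absurd h' (ne_of_gt ha)
        · linarith
      apply hminlem
      intro ψ
      rw [hφval, ← hca a, hPWR ψ]
      have hzabs : ∀ j : Fin N,
          ‖(r j : ℂ) * Complex.exp ((ψ j : ℂ) * Complex.I)‖ = r j := by
        intro j
        rw [norm_mul, Complex.norm_real, Real.norm_eq_abs, Complex.norm_exp_ofReal_mul_I, mul_one,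
          abs_of_pos (hr j)]
      have h5 : cF a ≤ ‖∑ i, (r i : ℂ) * Complex.exp ((ψ i : ℂ) * Complex.I)‖ := by
        have hsplit : (∑ i, (r i : ℂ) * Complex.exp ((ψ i : ℂ) * Complex.I))
            = (r a : ℂ) * Complex.exp ((ψ a : ℂ) * Complex.I)
              + ∑ i ∈ Finset.univ.erase a, (r i : ℂ) * Complex.exp ((ψ i : ℂ) * Complex.I) :=
          (Finset.add_sum_erase _ _ (Finset.mem_univ a)).symm
        have h6 : ‖∑ i ∈ Finset.univ.erase a,
              (r i : ℂ) * Complex.exp ((ψ i : ℂ) * Complex.I)‖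
            ≤ ∑ i ∈ Finset.univ.erase a, r i :=
          le_trans (norm_sum_le _ _)
            (le_of_eq (Finset.sum_congr rfl fun j _ => hzabs j))
        have h7 := norm_sub_norm_le ((r a : ℂ) * Complex.exp ((ψ a : ℂ) * Complex.I))
          (-(∑ i ∈ Finset.univ.erase a, (r i : ℂ) * Complex.exp ((ψ i : ℂ) * Complex.I)))
        simp only [norm_neg, sub_neg_eq_add] at h7
        rw [hzabs a] at h7
        rw [hsplit]
        linarith [hkey]
      calc cF a ^ 2
          ≤ (‖∑ i, (r i : ℂ) * Complex.exp ((ψ i : ℂ) * Complex.I)‖) ^ 2 :=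
            pow_le_pow_left₀ ha.le h5 2
end

section
/- Let N ≥ 1 and r : Fin N → ℝ with 0 ≤ r_i for all i, let R = max_i r_i, and define PWR : EuclideanSpace ℝ (Fin N) → ℝ by PWR(φ) = |∑_i r_i · exp(φ_i · I)|². Then the gradient of PWR is Lipschitz with constant 4·N·R²: for all x, y ∈ EuclideanSpace ℝ (Fin N), ‖fderiv ℝ PWR x − fderiv ℝ PWR y‖ ≤ 4·N·R²·‖x − y‖. (Appendix E: PWR_w has a Lipschitz gradient, as required for the gradient-descent convergence result.) -/
open Complex Real

lemma abs_sin_sub_sin_le (a b : ℝ) : |Real.sin a - Real.sin b| ≤ |a - b| := by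
  rw [Real.sin_sub_sin, abs_mul, abs_mul]
  have h2 : |(2:ℝ)| = 2 := _root_.abs_of_pos (by norm_num)
  rw [h2]
  have h3 : 2 * |Real.sin ((a - b) / 2)| * |Real.cos ((a + b) / 2)|
      ≤ 2 * |(a - b) / 2| * 1 :=
    mul_le_mul (mul_le_mul_of_nonneg_left Real.abs_sin_le_abs (by norm_num))
      (Real.abs_cos_le_one _) (abs_nonneg _) (by positivity)
  calc 2 * |Real.sin ((a - b) / 2)| * |Real.cos ((a + b) / 2)|
      ≤ 2 * |(a - b) / 2| * 1 := h3
    _ = |a - b| := by rw [abs_div, h2]; ring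

lemma cs_sum {n : ℕ} (f g : Fin n → ℝ) :
    ∑ i, |f i| * |g i| ≤ Real.sqrt (∑ i, f i ^ 2) * Real.sqrt (∑ i, g i ^ 2) := by
  have h := Finset.sum_mul_sq_le_sq_mul_sq Finset.univ (fun i => |f i|) (fun i => |g i|)
  have e1 : ∑ i, |f i| ^ 2 = ∑ i, f i ^ 2 := Finset.sum_congr rfl fun i _ => sq_abs _
  have e2 : ∑ i, |g i| ^ 2 = ∑ i, g i ^ 2 := Finset.sum_congr rfl fun i _ => sq_abs _
  rw [e1, e2] at h
  have h0 : (0:ℝ) ≤ ∑ i, |f i| * |g i| := Finset.sum_nonneg fun i _ => by positivity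
  rw [← Real.sqrt_sq h0, ← Real.sqrt_mul (by positivity)]
  exact Real.sqrt_le_sqrt h

lemma hasFDeriv_aux (N : ℕ) (r : Fin N → ℝ) (z : EuclideanSpace ℝ (Fin N)) :
    HasFDerivAt (fun φ : EuclideanSpace ℝ (Fin N) =>
      (∑ i, r i * Real.cos (φ i)) * (∑ i, r i * Real.cos (φ i))
        + (∑ i, r i * Real.sin (φ i)) * (∑ i, r i * Real.sin (φ i)))
      (∑ k, ((2 * r k) * ((∑ i, r i * Real.sin (z i)) * Real.cos (z k)
            - (∑ i, r i * Real.cos (z i)) * Real.sin (z k)))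
          • EuclideanSpace.proj (𝕜 := ℝ) k) z := by
  have hproj : ∀ k, HasFDerivAt (fun φ : EuclideanSpace ℝ (Fin N) => φ k)
      (EuclideanSpace.proj (𝕜 := ℝ) k) z := by
    intro k
    exact (EuclideanSpace.proj (𝕜 := ℝ) k).hasFDerivAt
  have hcos : ∀ k, HasFDerivAt (fun φ : EuclideanSpace ℝ (Fin N) => r k * Real.cos (φ k))
      ((r k * (-Real.sin (z k))) • EuclideanSpace.proj (𝕜 := ℝ) k) z := by
    intro k
    have h := ((Real.hasDerivAt_cos (z k)).comp_hasFDerivAt z (hproj k)).const_mul (r k)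
    simpa [Function.comp, smul_smul] using h
  have hsin : ∀ k, HasFDerivAt (fun φ : EuclideanSpace ℝ (Fin N) => r k * Real.sin (φ k))
      ((r k * Real.cos (z k)) • EuclideanSpace.proj (𝕜 := ℝ) k) z := by
    intro k
    have h := ((Real.hasDerivAt_sin (z k)).comp_hasFDerivAt z (hproj k)).const_mul (r k)
    simpa [Function.comp, smul_smul] using h
  have h1 : HasFDerivAt (fun φ : EuclideanSpace ℝ (Fin N) => ∑ i, r i * Real.cos (φ i))
      (∑ k, (r k * (-Real.sin (z k))) • EuclideanSpace.proj (𝕜 := ℝ) k) z :=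
    HasFDerivAt.fun_sum fun k _ => hcos k
  have h2 : HasFDerivAt (fun φ : EuclideanSpace ℝ (Fin N) => ∑ i, r i * Real.sin (φ i))
      (∑ k, (r k * Real.cos (z k)) • EuclideanSpace.proj (𝕜 := ℝ) k) z :=
    HasFDerivAt.fun_sum fun k _ => hsin k
  have h := (h1.mul h1).add (h2.mul h2)
  refine h.congr_fderiv ?_
  ext v
  simp only [ContinuousLinearMap.sum_apply, ContinuousLinearMap.smul_apply,
    ContinuousLinearMap.add_apply, ContinuousLinearMap.coe_smul', Pi.smul_apply,
    PiLp.proj_apply, smul_eq_mul, Finset.mul_sum, ← Finset.sum_add_distrib]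
  exact Finset.sum_congr rfl fun k _ => by ring

/-- Appendix E: `PWR_w` has a Lipschitz gradient with constant `4·N·R²`, where `R = max_i r i`. -/
theorem PWR_lipschitz_gradient (N : ℕ) (hN : 1 ≤ N) (r : Fin N → ℝ) (hr : ∀ i, 0 ≤ r i)
    (R : ℝ) (hR : IsGreatest (Set.range r) R)
    (PWR : EuclideanSpace ℝ (Fin N) → ℝ)
    (hPWR : ∀ φ : EuclideanSpace ℝ (Fin N),
      PWR φ = ‖∑ i, (r i : ℂ) * Complex.exp ((φ i : ℂ) * Complex.I)‖ ^ 2) :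
    ∀ x y : EuclideanSpace ℝ (Fin N),
      ‖fderiv ℝ PWR x - fderiv ℝ PWR y‖ ≤ 4 * N * R ^ 2 * ‖x - y‖ := by
  -- basic facts about R and r
  have hi0 : Nonempty (Fin N) := ⟨⟨0, hN⟩⟩
  have hrR : ∀ i, r i ≤ R := fun i => hR.2 ⟨i, rfl⟩
  have hR0 : 0 ≤ R := le_trans (hr hi0.some) (hrR hi0.some)
  have hsum : ∑ i, r i ≤ N * R := by
    calc ∑ i, r i ≤ ∑ _i : Fin N, R := Finset.sum_le_sum fun i _ => hrR i
      _ = N * R := by simp [Finset.sum_const, Finset.card_univ, nsmul_eq_mul]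
  have hsum0 : (0:ℝ) ≤ ∑ i, r i := Finset.sum_nonneg fun i _ => hr i
  -- rewrite PWR as a sum of squares of real and imaginary parts
  have hP : PWR = fun φ : EuclideanSpace ℝ (Fin N) =>
      (∑ i, r i * Real.cos (φ i)) * (∑ i, r i * Real.cos (φ i))
        + (∑ i, r i * Real.sin (φ i)) * (∑ i, r i * Real.sin (φ i)) := by
    funext φ
    rw [hPWR φ, Complex.sq_norm, Complex.normSq_apply]
    have hre : (∑ i, (r i : ℂ) * Complex.exp ((φ i : ℂ) * Complex.I)).re
        = ∑ i, r i * Real.cos (φ i) := by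
      rw [Complex.re_sum]
      exact Finset.sum_congr rfl fun i _ => by
        rw [Complex.re_ofReal_mul, Complex.exp_ofReal_mul_I_re]
    have him : (∑ i, (r i : ℂ) * Complex.exp ((φ i : ℂ) * Complex.I)).im
        = ∑ i, r i * Real.sin (φ i) := by
      rw [Complex.im_sum]
      exact Finset.sum_congr rfl fun i _ => by
        rw [Complex.im_ofReal_mul, Complex.exp_ofReal_mul_I_im]
    rw [hre, him]
  -- gradient components
  set g : EuclideanSpace ℝ (Fin N) → Fin N → ℝ := fun z k =>
    (2 * r k) * ((∑ i, r i * Real.sin (z i)) * Real.cos (z k)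
      - (∑ i, r i * Real.cos (z i)) * Real.sin (z k)) with hg
  have hfd : ∀ z : EuclideanSpace ℝ (Fin N),
      fderiv ℝ PWR z = ∑ k, (g z k) • EuclideanSpace.proj (𝕜 := ℝ) k := by
    intro z
    rw [hP]
    exact (hasFDeriv_aux N r z).fderiv
  -- alternate form of g
  have hg2 : ∀ (z : EuclideanSpace ℝ (Fin N)) k,
      g z k = (2 * r k) * ∑ i, r i * Real.sin (z i - z k) := by
    intro z k
    rw [hg]
    simp only [Finset.sum_mul, ← Finset.sum_sub_distrib]
    congr 1
    exact Finset.sum_congr rfl fun i _ => by rw [Real.sin_sub]; ring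
  intro x y
  -- bound on the difference of gradient components
  set S : ℝ := ∑ i, |x i - y i| with hS
  have hS0 : 0 ≤ S := Finset.sum_nonneg fun i _ => abs_nonneg _
  have hgd : ∀ k, |g x k - g y k| ≤ 2 * R ^ 2 * S + 2 * N * R ^ 2 * |x k - y k| := by
    intro k
    rw [hg2 x k, hg2 y k, ← mul_sub, ← Finset.sum_sub_distrib]
    have step : ∀ i, |r i * Real.sin (x i - x k) - r i * Real.sin (y i - y k)|
        ≤ r i * (|x i - y i| + |x k - y k|) := by
      intro i
      rw [← mul_sub, abs_mul, _root_.abs_of_nonneg (hr i)]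
      refine mul_le_mul_of_nonneg_left ?_ (hr i)
      calc |Real.sin (x i - x k) - Real.sin (y i - y k)|
          ≤ |Real.sin (x i - x k) - Real.sin (y i - x k)|
            + |Real.sin (y i - x k) - Real.sin (y i - y k)| :=
            abs_sub_le _ _ _
        _ ≤ |x i - y i| + |x k - y k| := by
            refine add_le_add ((_root_.abs_sin_sub_sin_le _ _).trans ?_)
              ((_root_.abs_sin_sub_sin_le _ _).trans ?_)
            · apply le_of_eq; congr 1; ring
            · apply le_of_eq
              rw [show y i - x k - (y i - y k) = -(x k - y k) by ring, abs_neg]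
    have hrk2 : (0:ℝ) ≤ 2 * r k := by linarith [hr k]
    calc |2 * r k * ∑ i, (r i * Real.sin (x i - x k) - r i * Real.sin (y i - y k))|
        ≤ 2 * r k * ∑ i, r i * (|x i - y i| + |x k - y k|) := by
          rw [abs_mul, _root_.abs_of_nonneg hrk2]
          exact mul_le_mul_of_nonneg_left ((Finset.abs_sum_le_sum_abs _ _).trans
            (Finset.sum_le_sum fun i _ => step i)) hrk2
      _ = 2 * r k * (∑ i, r i * |x i - y i|) + 2 * r k * (∑ i, r i) * |x k - y k| := by
          have e : ∑ i, r i * (|x i - y i| + |x k - y k|)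
              = (∑ i, r i * |x i - y i|) + (∑ i, r i) * |x k - y k| := by
            rw [Finset.sum_mul, ← Finset.sum_add_distrib]
            exact Finset.sum_congr rfl fun i _ => by ring
          rw [e]; ring
      _ ≤ 2 * R ^ 2 * S + 2 * N * R ^ 2 * |x k - y k| := by
          refine add_le_add ?_ ?_
          · have h1 : ∑ i, r i * |x i - y i| ≤ R * S := by
              rw [hS, Finset.mul_sum]
              exact Finset.sum_le_sum fun i _ =>
                mul_le_mul_of_nonneg_right (hrR i) (abs_nonneg _)
            have h2 : (0:ℝ) ≤ ∑ i, r i * |x i - y i| :=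
              Finset.sum_nonneg fun i _ => mul_nonneg (hr i) (abs_nonneg _)
            calc 2 * r k * (∑ i, r i * |x i - y i|) ≤ 2 * R * (R * S) :=
                  mul_le_mul (by linarith [hrR k]) h1 h2 (by linarith)
              _ = 2 * R ^ 2 * S := by ring
          · refine mul_le_mul_of_nonneg_right ?_ (abs_nonneg _)
            calc 2 * r k * (∑ i, r i) ≤ 2 * R * (N * R) :=
                mul_le_mul (by linarith [hrR k]) hsum hsum0 (by linarith)
              _ = 2 * N * R ^ 2 := by ring
  -- norm identities
  have hnv : ∀ w : EuclideanSpace ℝ (Fin N), Real.sqrt (∑ i, w i ^ 2) = ‖w‖ := by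
    intro w
    rw [EuclideanSpace.norm_eq]
    congr 1
    exact Finset.sum_congr rfl fun i _ => by rw [Real.norm_eq_abs, _root_.sq_abs]
  have hnd : Real.sqrt (∑ i, (x i - y i) ^ 2) = ‖x - y‖ := by
    rw [← hnv (x - y)]
    congr 1
  have hone : Real.sqrt (∑ _i : Fin N, (1:ℝ) ^ 2) = Real.sqrt N := by
    simp [Finset.sum_const, Finset.card_univ]
  -- Cauchy–Schwarz consequences
  have c1 : ∀ w : EuclideanSpace ℝ (Fin N), ∑ i, |w i| ≤ Real.sqrt N * ‖w‖ := by
    intro w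
    have h := cs_sum (fun _ : Fin N => (1:ℝ)) (fun i => w i)
    simpa [hone, hnv w] using h
  have c2 : S ≤ Real.sqrt N * ‖x - y‖ := by
    have h := cs_sum (fun _ : Fin N => (1:ℝ)) (fun i => x i - y i)
    simpa [hone, hnd, hS] using h
  have c3 : ∀ v : EuclideanSpace ℝ (Fin N),
      ∑ k, |x k - y k| * |v k| ≤ ‖x - y‖ * ‖v‖ := by
    intro v
    have h := cs_sum (fun k => x k - y k) (fun k => v k)
    rw [hnd, hnv v] at h
    exact h
  -- the operator norm bound
  refine ContinuousLinearMap.opNorm_le_bound _ (by positivity) ?_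
  intro v
  have happ : (fderiv ℝ PWR x - fderiv ℝ PWR y) v = ∑ k, (g x k - g y k) * v k := by
    rw [ContinuousLinearMap.sub_apply, hfd x, hfd y]
    simp only [ContinuousLinearMap.sum_apply, ContinuousLinearMap.smul_apply,
      PiLp.proj_apply, smul_eq_mul, ← Finset.sum_sub_distrib]
    exact Finset.sum_congr rfl fun k _ => by ring
  rw [happ, Real.norm_eq_abs]
  calc |∑ k, (g x k - g y k) * v k|
      ≤ ∑ k, |g x k - g y k| * |v k| := by
        refine (Finset.abs_sum_le_sum_abs _ _).trans (le_of_eq ?_)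
        exact Finset.sum_congr rfl fun k _ => abs_mul _ _
    _ ≤ ∑ k, (2 * R ^ 2 * S + 2 * N * R ^ 2 * |x k - y k|) * |v k| :=
        Finset.sum_le_sum fun k _ => mul_le_mul_of_nonneg_right (hgd k) (abs_nonneg _)
    _ = 2 * R ^ 2 * S * (∑ k, |v k|) + 2 * N * R ^ 2 * ∑ k, |x k - y k| * |v k| := by
        rw [Finset.sum_congr rfl fun k (_ : k ∈ Finset.univ) =>
          (show (2 * R ^ 2 * S + 2 * N * R ^ 2 * |x k - y k|) * |v k|
            = 2 * R ^ 2 * S * |v k| + 2 * N * R ^ 2 * (|x k - y k| * |v k|) by ring),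
          Finset.sum_add_distrib, ← Finset.mul_sum, ← Finset.mul_sum]
    _ ≤ 2 * R ^ 2 * (Real.sqrt N * ‖x - y‖) * (Real.sqrt N * ‖v‖)
          + 2 * N * R ^ 2 * (‖x - y‖ * ‖v‖) := by
        refine add_le_add ?_ (mul_le_mul_of_nonneg_left (c3 v) (by positivity))
        refine mul_le_mul (mul_le_mul_of_nonneg_left c2 (by positivity)) (c1 v)
          (Finset.sum_nonneg fun k _ => abs_nonneg _) ?_
        have : (0:ℝ) ≤ Real.sqrt N * ‖x - y‖ := by positivity
        positivity
    _ = 2 * R ^ 2 * (Real.sqrt N * Real.sqrt N) * ‖x - y‖ * ‖v‖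
          + 2 * N * R ^ 2 * ‖x - y‖ * ‖v‖ := by ring
    _ = 4 * N * R ^ 2 * ‖x - y‖ * ‖v‖ := by
        rw [Real.mul_self_sqrt (Nat.cast_nonneg N)]; ring
end

section
/- Let (Ω, μ) be a probability space, let (z_i)_{i∈ℕ} be an i.i.d. sequence of integrable complex-valued random variables with 𝔼[|z₀|] > 0, and let h : Ω → ℂ be a random variable with μ(h = 0) = 0. Then μ({ω : ∃ φ : Fin N → ℝ, (∑_{i < N} z_i(ω) · exp(φ_i · I)) + h(ω) = 0}) → 1 as N → ∞; equivalently (by Lemma 2), the probability that min_φ |∑_{i<N} z_i(ω)·exp(φ_i·I)| ≤ |h(ω)| ≤ max_φ |∑_{i<N} z_i(ω)·exp(φ_i·I)| tends to 1. (Paper's Theorem 1: a perfect-covertness solution exists with probability tending to 1 as the number of IRS elements grows; in the paper z_i = g_{s,w,i}·h_{a,s,i} are products of independent complex Gaussians and h = h_{a,w} is complex Gaussian, which satisfy these hypotheses.) -/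
open Complex MeasureTheory ProbabilityTheory Filter Topology

noncomputable def Complex.abs : AbsoluteValue ℂ ℝ := NormedField.toAbsoluteValue ℂ

theorem Complex.abs_apply' (z : ℂ) : Complex.abs z = ‖z‖ := rfl

theorem Complex.norm_eq_abs (z : ℂ) : ‖z‖ = Complex.abs z := rfl

theorem Complex.abs_ofReal (x : ℝ) : Complex.abs (x : ℂ) = |x| := by
  rw [Complex.abs_apply', Complex.norm_real, Real.norm_eq_abs]

theorem Complex.continuous_abs : Continuous Complex.abs := continuous_norm

theorem Complex.abs_mul_exp_arg_mul_I (x : ℂ) :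
    ((Complex.abs x : ℝ) : ℂ) * Complex.exp ((x.arg : ℂ) * Complex.I) = x :=
  Complex.norm_mul_exp_arg_mul_I x

theorem Complex.abs_exp_ofReal_mul_I (x : ℝ) : Complex.abs (Complex.exp ((x : ℂ) * Complex.I)) = 1 :=
  Complex.norm_exp_ofReal_mul_I x

namespace PerfectCovert

noncomputable def g (w : ℕ → ℂ) (N : ℕ) (φ : Fin N → ℝ) : ℂ :=
  ∑ i : Fin N, w i * Complex.exp ((φ i : ℂ) * Complex.I)

noncomputable def S (w : ℕ → ℂ) (N : ℕ) : ℝ := ∑ i ∈ Finset.range N, Complex.abs (w i)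

def R (w : ℕ → ℂ) (N : ℕ) : Set ℝ := Set.range fun φ : Fin N → ℝ => Complex.abs (g w N φ)

lemma exists_rot (a b : ℂ) (hab : Complex.abs a = Complex.abs b) :
    ∃ θ : ℝ, a * Complex.exp ((θ : ℂ) * Complex.I) = b := by
  by_cases ha : a = 0
  · refine ⟨0, ?_⟩
    have : Complex.abs b = 0 := by simp [ha] at hab; simp [hab]
    simp [ha, Complex.abs.eq_zero.mp this]
  · refine ⟨(b / a).arg, ?_⟩
    have h1 : Complex.abs (b / a) = 1 := by
      rw [map_div₀, ← hab, div_self]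
      simpa using ha
    have := Complex.abs_mul_exp_arg_mul_I (b / a)
    rw [h1] at this
    simp only [ofReal_one, one_mul] at this
    rw [this]
    field_simp

lemma continuous_g (w : ℕ → ℂ) (N : ℕ) : Continuous (g w N) := by
  apply continuous_finset_sum
  intro i _
  exact continuous_const.mul (Complex.continuous_exp.comp
    ((Complex.continuous_ofReal.comp (continuous_apply i)).mul continuous_const))

lemma abs_g_le (w : ℕ → ℂ) (N : ℕ) (φ : Fin N → ℝ) : Complex.abs (g w N φ) ≤ S w N := by
  calc Complex.abs (g w N φ) ≤ ∑ i : Fin N, Complex.abs (w i * Complex.exp ((φ i : ℂ) * Complex.I)) :=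
        Complex.abs.sum_le _ _
    _ = ∑ i : Fin N, Complex.abs (w i) := by
        simp [map_mul, Complex.abs_exp_ofReal_mul_I]
    _ = S w N := (Fin.sum_univ_eq_sum_range (fun n => Complex.abs (w n)) N).trans rfl

lemma S_mem (w : ℕ → ℂ) (N : ℕ) : S w N ∈ R w N := by
  refine ⟨fun i => -(w i).arg, ?_⟩
  have key : ∀ i : Fin N, w i * Complex.exp (((-(w i).arg : ℝ) : ℂ) * Complex.I)
      = (Complex.abs (w i) : ℂ) := by
    intro i
    nth_rewrite 1 [← Complex.abs_mul_exp_arg_mul_I (w i)]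
    rw [mul_assoc, ← Complex.exp_add]
    have h0 : ((w i).arg : ℂ) * Complex.I + ((-(w i).arg : ℝ) : ℂ) * Complex.I = 0 := by
      push_cast; ring
    rw [h0, Complex.exp_zero, mul_one]
  unfold g
  simp only [key]
  rw [← Complex.ofReal_sum]
  rw [Complex.abs_ofReal,
    show (∑ i : Fin N, Complex.abs (w i)) = S w N from
      Fin.sum_univ_eq_sum_range (fun n => Complex.abs (w n)) N]
  exact _root_.abs_of_nonneg (Finset.sum_nonneg fun i _ => Complex.abs.nonneg (w i))


noncomputable def m (w : ℕ → ℂ) (N : ℕ) : ℝ := sInf (R w N)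

lemma g_reduce (w : ℕ → ℂ) (N : ℕ) (φ : Fin N → ℝ) :
    ∃ ψ : Fin N → ℝ, (∀ i, ψ i ∈ Set.Icc (0:ℝ) (2 * Real.pi)) ∧ g w N ψ = g w N φ := by
  refine ⟨fun i => 2 * Real.pi * Int.fract (φ i / (2 * Real.pi)), fun i => ?_, ?_⟩
  · constructor
    · have := Int.fract_nonneg (φ i / (2 * Real.pi))
      positivity
    · have h1 := Int.fract_lt_one (φ i / (2 * Real.pi))
      nlinarith [Real.pi_pos]
  · unfold g
    refine Finset.sum_congr rfl fun i _ => ?_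
    congr 1
    have hπ : (2 * Real.pi) ≠ 0 := by positivity
    have hr : φ i = 2 * Real.pi * Int.fract (φ i / (2 * Real.pi))
        + (⌊φ i / (2 * Real.pi)⌋ : ℝ) * (2 * Real.pi) := by
      rw [Int.fract]
      field_simp
      ring
    have : ((φ i : ℝ) : ℂ) * Complex.I
        = ((2 * Real.pi * Int.fract (φ i / (2 * Real.pi)) : ℝ) : ℂ) * Complex.I
          + (⌊φ i / (2 * Real.pi)⌋ : ℂ) * (2 * Real.pi * Complex.I) := by
      have hc : ((φ i : ℝ) : ℂ)
          = ((2 * Real.pi * Int.fract (φ i / (2 * Real.pi)) : ℝ) : ℂ)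
            + ((⌊φ i / (2 * Real.pi)⌋ : ℤ) : ℂ) * ((2 : ℂ) * (Real.pi : ℂ)) := by
        push_cast
        have h' := congrArg Complex.ofReal hr
        push_cast at h'
        linear_combination h'
      linear_combination Complex.I * hc
    rw [this, Complex.exp_add, Complex.exp_int_mul_two_pi_mul_I, mul_one]

lemma exists_min (w : ℕ → ℂ) (N : ℕ) :
    ∃ φ₀ : Fin N → ℝ, ∀ φ, Complex.abs (g w N φ₀) ≤ Complex.abs (g w N φ) := by
  have hcont : Continuous fun φ : Fin N → ℝ => Complex.abs (g w N φ) :=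
    Complex.continuous_abs.comp (continuous_g w N)
  have hK : IsCompact (Set.univ.pi fun _ : Fin N => Set.Icc (0:ℝ) (2 * Real.pi)) :=
    isCompact_univ_pi fun _ => isCompact_Icc
  have hne : (Set.univ.pi fun _ : Fin N => Set.Icc (0:ℝ) (2 * Real.pi)).Nonempty :=
    ⟨fun _ => 0, fun i _ => ⟨le_rfl, by positivity⟩⟩
  obtain ⟨φ₀, _, hmin⟩ := hK.exists_isMinOn hne hcont.continuousOn
  refine ⟨φ₀, fun φ => ?_⟩
  obtain ⟨ψ, hψ, hgψ⟩ := g_reduce w N φ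
  have hψK : ψ ∈ Set.univ.pi fun _ : Fin N => Set.Icc (0:ℝ) (2 * Real.pi) :=
    fun i _ => hψ i
  calc Complex.abs (g w N φ₀) ≤ Complex.abs (g w N ψ) := hmin hψK
    _ = Complex.abs (g w N φ) := by rw [hgψ]

lemma isLeast_m (w : ℕ → ℂ) (N : ℕ) : IsLeast (R w N) (m w N) := by
  obtain ⟨φ₀, h0⟩ := exists_min w N
  have hL : IsLeast (R w N) (Complex.abs (g w N φ₀)) := by
    refine ⟨⟨φ₀, rfl⟩, ?_⟩
    rintro x ⟨φ, rfl⟩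
    exact h0 φ
  rw [m, hL.csInf_eq]
  exact hL

lemma m_nonneg (w : ℕ → ℂ) (N : ℕ) : 0 ≤ m w N := by
  obtain ⟨φ, hφ⟩ := (isLeast_m w N).1
  rw [← hφ]
  exact Complex.abs.nonneg _

lemma m_le (w : ℕ → ℂ) (N : ℕ) (φ : Fin N → ℝ) : m w N ≤ Complex.abs (g w N φ) :=
  (isLeast_m w N).2 ⟨φ, rfl⟩

lemma interval_mem (w : ℕ → ℂ) (N : ℕ) {c : ℝ} (h1 : m w N ≤ c) (h2 : c ≤ S w N) :
    c ∈ R w N := by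
  have hconn : IsPreconnected (R w N) := by
    have : R w N = (fun φ : Fin N → ℝ => Complex.abs (g w N φ)) '' Set.univ := by
      rw [Set.image_univ]; rfl
    rw [this]
    exact isPreconnected_univ.image _
      (Complex.continuous_abs.comp (continuous_g w N)).continuousOn
  exact hconn.ordConnected.out (isLeast_m w N).1 (S_mem w N) ⟨h1, h2⟩


lemma g_snoc (w : ℕ → ℂ) (N : ℕ) (φ : Fin N → ℝ) (θ : ℝ) :
    g w (N + 1) (Fin.snoc φ θ) = g w N φ + w N * Complex.exp ((θ : ℂ) * Complex.I) := by
  unfold g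
  rw [Fin.sum_univ_castSucc]
  congr 1
  · refine Finset.sum_congr rfl fun i _ => ?_
    rw [Fin.snoc_castSucc, Fin.coe_castSucc]
  · rw [Fin.snoc_last, Fin.val_last]

lemma factA (w : ℕ → ℂ) (N : ℕ) {a : ℝ} (ha : a ∈ R w N) :
    |a - Complex.abs (w N)| ∈ R w (N + 1) := by
  obtain ⟨φ, hφ⟩ := ha
  beta_reduce at hφ
  set r := Complex.abs (w N) with hr
  by_cases h0 : g w N φ = 0
  · have ha0 : a = 0 := by rw [← hφ, h0, map_zero]
    obtain ⟨θ, hθ⟩ := exists_rot (w N) ((r : ℝ) : ℂ) (by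
      rw [Complex.abs_ofReal, _root_.abs_of_nonneg (Complex.abs.nonneg _)])
    refine ⟨Fin.snoc φ θ, ?_⟩
    beta_reduce
    rw [g_snoc, h0, hθ, zero_add, Complex.abs_ofReal, ha0, zero_sub, abs_neg]
  · have hane : a ≠ 0 := by
      rw [← hφ]
      simpa using h0
    have hapos : 0 < a := lt_of_le_of_ne (hφ ▸ Complex.abs.nonneg _) (Ne.symm hane)
    obtain ⟨θ, hθ⟩ := exists_rot (w N) (-(((r / a : ℝ)) : ℂ) * g w N φ) (by
      rw [map_mul, map_neg_eq_map, Complex.abs_ofReal, hφ, _root_.abs_of_nonneg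
        (div_nonneg (Complex.abs.nonneg _) hapos.le), div_mul_cancel₀ _ hane])
    refine ⟨Fin.snoc φ θ, ?_⟩
    beta_reduce
    rw [g_snoc, hθ]
    have : g w N φ + -(((r / a : ℝ)) : ℂ) * g w N φ = (((1 - r / a : ℝ)) : ℂ) * g w N φ := by
      push_cast
      ring
    rw [this, map_mul, Complex.abs_ofReal, hφ]
    have e1 : (1 - r / a) * a = a - r := by field_simp
    calc |1 - r / a| * a = |1 - r / a| * |a| := by rw [_root_.abs_of_pos hapos]
      _ = |(1 - r / a) * a| := (abs_mul _ _).symm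
      _ = |a - r| := by rw [e1]

lemma factB (w : ℕ → ℂ) (N : ℕ) (ha : Complex.abs (w N) ∈ R w N) : (0 : ℝ) ∈ R w (N + 1) := by
  have := factA w N ha
  simpa using this

lemma solvable_iff (w : ℕ → ℂ) (N : ℕ) (c : ℂ) :
    (∃ φ : Fin N → ℝ, g w N φ + c = 0) ↔ m w N ≤ Complex.abs c ∧ Complex.abs c ≤ S w N := by
  constructor
  · rintro ⟨φ, hφ⟩
    have hg : g w N φ = -c := by linear_combination hφ
    have habs : Complex.abs (g w N φ) = Complex.abs c := by rw [hg, map_neg_eq_map]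
    exact ⟨habs ▸ m_le w N φ, habs ▸ abs_g_le w N φ⟩
  · rintro ⟨h1, h2⟩
    obtain ⟨φ, hφ⟩ := interval_mem w N h1 h2
    beta_reduce at hφ
    obtain ⟨θ, hθ⟩ := exists_rot (g w N φ) (-c) (by rw [hφ, map_neg_eq_map])
    refine ⟨fun i => φ i + θ, ?_⟩
    have : g w N (fun i => φ i + θ) = g w N φ * Complex.exp ((θ : ℂ) * Complex.I) := by
      unfold g
      rw [Finset.sum_mul]
      refine Finset.sum_congr rfl fun i _ => ?_
      rw [mul_assoc, ← Complex.exp_add]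
      push_cast
      ring_nf
    rw [this, hθ]
    ring


lemma S_succ (w : ℕ → ℂ) (N : ℕ) : S w (N + 1) = S w N + Complex.abs (w N) :=
  Finset.sum_range_succ _ _

lemma m_eq_iInf (w : ℕ → ℂ) (N : ℕ) :
    m w N = ⨅ q : Fin N → ℚ, Complex.abs (g w N (fun i => (q i : ℝ))) := by
  have hbdd : BddBelow (Set.range fun q : Fin N → ℚ =>
      Complex.abs (g w N (fun i => (q i : ℝ)))) := by
    refine ⟨0, ?_⟩
    rintro x ⟨q, rfl⟩
    exact Complex.abs.nonneg _
  apply le_antisymm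
  · exact le_ciInf fun q => m_le w N _
  · obtain ⟨φ₀, hmin⟩ := exists_min w N
    have hm : m w N = Complex.abs (g w N φ₀) := by
      refine le_antisymm (m_le w N φ₀) ?_
      obtain ⟨φ, hφ⟩ := (isLeast_m w N).1
      beta_reduce at hφ
      rw [← hφ]
      exact hmin φ
    refine le_of_forall_pos_le_add fun ε hε => ?_
    have hcont : Continuous fun φ : Fin N → ℝ => Complex.abs (g w N φ) :=
      Complex.continuous_abs.comp (continuous_g w N)
    obtain ⟨δ, hδ, hδ2⟩ := Metric.continuous_iff.mp hcont φ₀ ε hε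
    have : ∀ i : Fin N, ∃ q : ℚ, |φ₀ i - (q : ℝ)| < δ := fun i => exists_rat_near (φ₀ i) hδ
    choose q hq using this
    have hdist : dist (fun i => (q i : ℝ)) φ₀ < δ := by
      rw [dist_pi_lt_iff hδ]
      intro i
      rw [Real.dist_eq, abs_sub_comm]
      exact hq i
    have h2 := hδ2 _ hdist
    rw [Real.dist_eq] at h2
    have h3 : Complex.abs (g w N (fun i => (q i : ℝ))) < Complex.abs (g w N φ₀) + ε := by
      have := abs_lt.mp h2
      linarith [this.1, this.2]
    calc (⨅ q : Fin N → ℚ, Complex.abs (g w N (fun i => (q i : ℝ))))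
        ≤ Complex.abs (g w N (fun i => (q i : ℝ))) := ciInf_le hbdd q
      _ ≤ m w N + ε := by rw [hm]; exact h3.le

lemma eventually_m_eq_zero (w : ℕ → ℂ)
    (hS : Tendsto (S w) atTop atTop)
    (hr : ∀ᶠ N in atTop, Complex.abs (w N) ≤ S w N) :
    ∀ᶠ N in atTop, m w N = 0 := by
  obtain ⟨N₁, hN₁⟩ := eventually_atTop.mp hr
  -- Step 1: find N₂ ≥ N₁ with m w N₂ ≤ |w N₂|
  have step1 : ∃ N₂, N₁ ≤ N₂ ∧ m w N₂ ≤ Complex.abs (w N₂) := by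
    by_contra hcon
    push_neg at hcon
    have hdec : ∀ k, m w (N₁ + k) + S w (N₁ + k) ≤ m w N₁ + S w N₁ := by
      intro k
      induction k with
      | zero => simp
      | succ n ih =>
        have hlt := hcon (N₁ + n) (Nat.le_add_right _ _)
        have hmem := factA w (N₁ + n) (isLeast_m w (N₁ + n)).1
        have hm1 : m w (N₁ + n + 1) ≤ |m w (N₁ + n) - Complex.abs (w (N₁ + n))| :=
          (isLeast_m w (N₁ + n + 1)).2 hmem
        rw [_root_.abs_of_nonneg (by linarith)] at hm1
        have hS1 := S_succ w (N₁ + n)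
        have : N₁ + (n + 1) = N₁ + n + 1 := by ring
        rw [this]
        linarith
    obtain ⟨N, hNbig, hNge⟩ :=
      ((hS.eventually (eventually_gt_atTop (m w N₁ + S w N₁))).and
        (eventually_ge_atTop N₁)).exists
    obtain ⟨k, rfl⟩ := Nat.exists_eq_add_of_le hNge
    have := hdec k
    have := m_nonneg w (N₁ + k)
    linarith
  obtain ⟨N₂, hN₂ge, hN₂⟩ := step1
  -- Step 2: 0 ∈ R w N for all N ≥ N₂ + 1
  have step2 : ∀ k, (0 : ℝ) ∈ R w (N₂ + 1 + k) := by
    intro k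
    induction k with
    | zero =>
      exact factB w N₂ (interval_mem w N₂ hN₂ (hN₁ N₂ hN₂ge))
    | succ n ih =>
      have hm0 : m w (N₂ + 1 + n) = 0 :=
        le_antisymm ((isLeast_m w (N₂ + 1 + n)).2 ih) (m_nonneg w _)
      have hrin : Complex.abs (w (N₂ + 1 + n)) ∈ R w (N₂ + 1 + n) := by
        refine interval_mem w _ ?_ (hN₁ _ (by omega))
        rw [hm0]
        exact Complex.abs.nonneg _
      have := factB w (N₂ + 1 + n) hrin
      have heq : N₂ + 1 + (n + 1) = N₂ + 1 + n + 1 := by ring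
      rw [heq]
      exact this
  rw [eventually_atTop]
  refine ⟨N₂ + 1, fun N hN => ?_⟩
  obtain ⟨k, rfl⟩ := Nat.exists_eq_add_of_le hN
  exact le_antisymm ((isLeast_m w (N₂ + 1 + k)).2 (step2 k)) (m_nonneg w _)


lemma aux_tendsto {a : ℕ → ℝ} {L : ℝ} (hL : 0 < L)
    (h : Tendsto (fun n : ℕ => (n : ℝ)⁻¹ * a n) atTop (𝓝 L)) :
    Tendsto a atTop atTop ∧ ∀ᶠ N in atTop, a (N + 1) - a N ≤ a N := by
  have hhalf : (0:ℝ) < L / 2 := by linarith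
  have h1 : ∀ᶠ n : ℕ in atTop, L / 2 < (n : ℝ)⁻¹ * a n :=
    h.eventually (eventually_gt_nhds (by linarith))
  have hgrow : ∀ᶠ n : ℕ in atTop, (L / 2) * (n : ℝ) ≤ a n := by
    filter_upwards [h1, eventually_ge_atTop 1] with n hn hn1
    have hn0 : (0:ℝ) < (n : ℝ) := by exact_mod_cast hn1
    rw [inv_mul_eq_div, lt_div_iff₀ hn0] at hn
    linarith
  have hatop : Tendsto a atTop atTop := by
    refine tendsto_atTop_mono' atTop hgrow ?_
    exact (tendsto_natCast_atTop_atTop (R := ℝ)).const_mul_atTop hhalf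
  refine ⟨hatop, ?_⟩
  have hcomp : Tendsto (fun n : ℕ => (((n + 1 : ℕ) : ℝ))⁻¹ * a (n + 1)) atTop (𝓝 L) :=
    h.comp (tendsto_add_atTop_nat 1)
  have hratio : Tendsto (fun n : ℕ => ((n : ℝ) + 1) / (n : ℝ)) atTop (𝓝 1) := by
    have h2 : Tendsto (fun n : ℕ => 1 + 1 / (n : ℝ)) atTop (𝓝 (1 + 0)) :=
      tendsto_const_nhds.add tendsto_one_div_atTop_nhds_zero_nat
    rw [add_zero] at h2
    refine h2.congr' ?_
    filter_upwards [eventually_ge_atTop 1] with n hn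
    have hn0 : (n : ℝ) ≠ 0 := Nat.cast_ne_zero.mpr (by omega)
    field_simp
  have h2' : Tendsto (fun n : ℕ => (n : ℝ)⁻¹ * a (n + 1)) atTop (𝓝 L) := by
    have hmul := hratio.mul hcomp
    rw [one_mul] at hmul
    refine hmul.congr' ?_
    filter_upwards [eventually_ge_atTop 1] with n hn
    have hn0 : (n : ℝ) ≠ 0 := Nat.cast_ne_zero.mpr (by omega)
    have hn1 : ((n : ℝ) + 1) ≠ 0 := by positivity
    push_cast
    field_simp
  have hdiff : Tendsto (fun n : ℕ => (n : ℝ)⁻¹ * a (n + 1) - (n : ℝ)⁻¹ * a n) atTop (𝓝 0) := by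
    have hsub := h2'.sub h
    rw [sub_self] at hsub
    refine hsub.congr fun n => ?_
    ring
  have h3 : ∀ᶠ n : ℕ in atTop, (n : ℝ)⁻¹ * a (n + 1) - (n : ℝ)⁻¹ * a n < L / 2 :=
    hdiff.eventually (eventually_lt_nhds hhalf)
  filter_upwards [h1, h3, eventually_ge_atTop 1] with n hn hn3 hn1
  have hn0 : (0:ℝ) < (n : ℝ) := by exact_mod_cast hn1
  have hlt : (n : ℝ)⁻¹ * a (n + 1) < (n : ℝ)⁻¹ * (2 * a n) := by
    have : (n : ℝ)⁻¹ * (2 * a n) = (n : ℝ)⁻¹ * a n + (n : ℝ)⁻¹ * a n := by ring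
    rw [this]
    linarith
  have := (mul_lt_mul_iff_right₀ (inv_pos.mpr hn0)).mp hlt
  linarith

end PerfectCovert

open PerfectCovert in
/-- Paper's Theorem 1: for an i.i.d. integrable sequence of channel coefficients with
positive mean modulus and an a.s. nonzero direct channel, the probability that a
perfect-covertness phase configuration exists tends to 1 as the number of IRS elements
grows. -/
theorem perfect_covertness_prob_tendsto_one
    {Ω : Type*} [MeasurableSpace Ω] (μ : Measure Ω) [IsProbabilityMeasure μ]
    (z : ℕ → Ω → ℂ) (h : Ω → ℂ)
    (hmeas : ∀ i, Measurable (z i))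
    (hindep : iIndepFun z μ)
    (hident : ∀ i, IdentDistrib (z i) (z 0) μ μ)
    (hint : Integrable (z 0) μ)
    (hpos : 0 < ∫ ω, ‖z 0 ω‖ ∂μ)
    (hmeash : Measurable h)
    (hnz : μ {ω | h ω = 0} = 0) :
    Tendsto (fun N : ℕ =>
        μ {ω | ∃ φ : Fin N → ℝ,
            (∑ i : Fin N, z i ω * Complex.exp ((φ i : ℂ) * Complex.I)) + h ω = 0})
      atTop (nhds 1) := by
  classical
  set E : ℕ → Set Ω := fun N => {ω | ∃ φ : Fin N → ℝ,
      (∑ i : Fin N, z i ω * Complex.exp ((φ i : ℂ) * Complex.I)) + h ω = 0} with hE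
  have habs : Measurable Complex.abs := Complex.continuous_abs.measurable
  set r : ℕ → Ω → ℝ := fun i ω => Complex.abs (z i ω) with hrdef
  -- the SLLN
  have hint' : Integrable (r 0) μ := by
    have : r 0 = fun ω => ‖z 0 ω‖ := by
      funext ω; rw [Complex.norm_eq_abs]
    rw [this]
    exact hint.norm
  have hindep' : Pairwise (Function.onFun (IndepFun · · μ) r) := by
    intro i j hij
    exact (hindep.indepFun hij).comp habs habs
  have hident' : ∀ i, IdentDistrib (r i) (r 0) μ μ := fun i => (hident i).comp habs
  have hslln := ProbabilityTheory.strong_law_ae r hint' hindep' hident'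
  have hLpos : 0 < ∫ ω, r 0 ω ∂μ := hpos
  -- key event membership description
  have hsolve : ∀ (N : ℕ) (ω : Ω),
      ω ∈ E N ↔ m (fun k => z k ω) N ≤ Complex.abs (h ω) ∧
        Complex.abs (h ω) ≤ S (fun k => z k ω) N := fun N ω =>
    solvable_iff (fun k => z k ω) N (h ω)
  -- a.e. eventual membership
  have hAE : ∀ᵐ ω ∂μ, ∀ᶠ N in atTop, ω ∈ E N := by
    filter_upwards [hslln] with ω hω
    set w : ℕ → ℂ := fun k => z k ω with hw
    have hω' : Tendsto (fun n : ℕ => (n : ℝ)⁻¹ * S w n) atTop (𝓝 (∫ x, r 0 x ∂μ)) := by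
      refine hω.congr fun n => ?_
      rw [smul_eq_mul]
      rfl
    obtain ⟨hStop, hrev⟩ := aux_tendsto hLpos hω'
    have hrev' : ∀ᶠ N in atTop, Complex.abs (w N) ≤ S w N := by
      filter_upwards [hrev] with N hN
      rw [S_succ] at hN
      linarith
    have hm0 := eventually_m_eq_zero w hStop hrev'
    have hSbig : ∀ᶠ N in atTop, Complex.abs (h ω) ≤ S w N :=
      hStop.eventually (eventually_ge_atTop _)
    filter_upwards [hm0, hSbig] with N h1 h2
    exact (hsolve N ω).mpr ⟨h1 ▸ Complex.abs.nonneg _, h2⟩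
  -- the squeeze
  set F : ℕ → Set Ω := fun N => ⋂ (k) (_ : N ≤ k), E k with hF
  have hmono : Monotone F := by
    intro M N hMN
    refine Set.iInter₂_mono' fun k hk => ⟨k, le_trans hMN hk, subset_rfl⟩
  have hsub : ∀ N, F N ⊆ E N := fun N x hx => Set.mem_iInter₂.mp hx N le_rfl
  have hUnion : μ (⋃ N, F N) = 1 := by
    have hcompl : μ ((⋃ N, F N)ᶜ) = 0 := by
      refine measure_mono_null ?_ (ae_iff.mp hAE)
      intro ω hω
      simp only [Set.mem_compl_iff, Set.mem_iUnion, not_exists] at hω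
      simp only [Set.mem_setOf_eq]
      intro hev
      obtain ⟨N₀, hN₀⟩ := eventually_atTop.mp hev
      exact hω N₀ (Set.mem_iInter₂.mpr fun k hk => hN₀ k hk)
    have hle : (1 : ENNReal) ≤ μ (⋃ N, F N) := by
      have h1 : (1 : ENNReal) = μ ((⋃ N, F N) ∪ (⋃ N, F N)ᶜ) := by
        rw [Set.union_compl_self, measure_univ]
      calc (1 : ENNReal) = μ ((⋃ N, F N) ∪ (⋃ N, F N)ᶜ) := h1
        _ ≤ μ (⋃ N, F N) + μ ((⋃ N, F N)ᶜ) := measure_union_le _ _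
        _ = μ (⋃ N, F N) := by rw [hcompl, add_zero]
    exact le_antisymm prob_le_one hle
  have htendF : Tendsto (fun N => μ (F N)) atTop (𝓝 1) := by
    have := tendsto_measure_iUnion_atTop (μ := μ) hmono
    rw [hUnion] at this
    exact this
  refine tendsto_of_tendsto_of_tendsto_of_le_of_le htendF tendsto_const_nhds
    (fun N => measure_mono (hsub N)) (fun N => prob_le_one)
end

section
/- For all real r₁, r₂, r₃ > 0: 2·r₁·r₃ − r₂·(r₁ − r₃) − √(2·r₁·r₂²·r₃ + r₂²·r₃² + r₁²·(r₂² + 4·r₃²)) < 0 if and only if r₃ < r₁ + r₂. (The sign analysis of the smallest Hessian eigenvalue λ₁ at the critical point (φ₁, φ₂, φ₃) = (0, 0, π) of PWR_w for N = 3, from Appendix F.) -/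
open Real

/-- Appendix F: the smallest Hessian eigenvalue at the aligned critical point
`(φ₁, φ₂, φ₃) = (0, 0, π)` is negative iff `r₃ < r₁ + r₂`. -/
theorem lambda_min_neg_iff (r₁ r₂ r₃ : ℝ) (h₁ : 0 < r₁) (h₂ : 0 < r₂) (h₃ : 0 < r₃) :
    2 * r₁ * r₃ - r₂ * (r₁ - r₃) -
        Real.sqrt (2 * r₁ * r₂ ^ 2 * r₃ + r₂ ^ 2 * r₃ ^ 2 + r₁ ^ 2 * (r₂ ^ 2 + 4 * r₃ ^ 2)) < 0
      ↔ r₃ < r₁ + r₂ := by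
  set A : ℝ := 2 * r₁ * r₃ - r₂ * (r₁ - r₃) with hA
  set S : ℝ := 2 * r₁ * r₂ ^ 2 * r₃ + r₂ ^ 2 * r₃ ^ 2 + r₁ ^ 2 * (r₂ ^ 2 + 4 * r₃ ^ 2) with hS
  clear_value A S
  have key : S - A ^ 2 = 4 * r₁ * r₂ * r₃ * (r₁ + r₂ - r₃) := by rw [hA, hS]; ring
  have hSpos : 0 < S := by rw [hS]; positivity
  constructor
  · intro h
    by_contra hc
    push_neg at hc
    have h4 : r₁ * (r₁ + r₂) ≤ r₁ * r₃ := mul_le_mul_of_nonneg_left hc h₁.le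
    have hApos : 0 < A := by nlinarith [mul_pos h₁ h₂, mul_pos h₂ h₃, mul_pos h₁ h₁]
    have hprod : 0 ≤ 4 * r₁ * r₂ * r₃ * (r₃ - (r₁ + r₂)) :=
      mul_nonneg (by positivity) (by linarith)
    have hSA : S ≤ A ^ 2 := by nlinarith [key, hprod]
    have : Real.sqrt S ≤ A := by
      calc Real.sqrt S ≤ Real.sqrt (A ^ 2) := Real.sqrt_le_sqrt hSA
        _ = A := by rw [Real.sqrt_sq hApos.le]
    linarith
  · intro h
    rcases le_or_gt A 0 with hA0 | hA0
    · have := Real.sqrt_pos.mpr hSpos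
      linarith
    · have hprod : 0 < 4 * r₁ * r₂ * r₃ * (r₁ + r₂ - r₃) :=
        mul_pos (by positivity) (by linarith)
      have hlt : A ^ 2 < S := by linarith [key, hprod]
      have : A < Real.sqrt S := by
        have := Real.sqrt_lt_sqrt (sq_nonneg A) hlt
        rwa [Real.sqrt_sq hA0.le] at this
      linarith
end
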